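/- arXiv:2103.03318 — 4 statements merged into one kernel-verified Lean document; each statement's English description precedes it below -/
import Mathlib

section
/- Let q : ℝ → ℝ^k be continuous with finite energy E(q) < ∞ and suppose the zero set Σ of V is finite and the Hessian of V is positive definite at each point of Σ. Then there exist σ₋, σ₊ ∈ Σ such that q(t) → σ₋ as t → -∞ and q(t) → σ₊ as t → +∞. -/
open MeasureTheory Filter intervalIntegral
open scoped RealInnerProductSpace Topology

noncomputable section

variable {k : ℕ}

/-- Absolutely continuous curve whose (a.e.) derivative is `deriv q`
(the model for `H¹_loc(ℝ, ℝᵏ)` curves). -/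
def AC (q : ℝ → EuclideanSpace ℝ (Fin k)) : Prop :=
  MeasureTheory.LocallyIntegrable (deriv q) volume ∧
    ∀ a b : ℝ, q b - q a = ∫ t in a..b, deriv q t

/-- Energy density `½|q'(t)|² + V(q(t))`. -/
def Ed (V : EuclideanSpace ℝ (Fin k) → ℝ) (q : ℝ → EuclideanSpace ℝ (Fin k)) (t : ℝ) : ℝ :=
  (1 / 2) * ‖deriv q t‖ ^ 2 + V (q t)

/-- Finite energy: the energy density is integrable over `ℝ`. -/
def FiniteEnergy (V : EuclideanSpace ℝ (Fin k) → ℝ) (q : ℝ → EuclideanSpace ℝ (Fin k)) : Prop :=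
  Integrable (Ed V q) volume

/-- The energy `E(q) = ∫ ½|q'|² + V(q)`. -/
def Energy (V : EuclideanSpace ℝ (Fin k) → ℝ) (q : ℝ → EuclideanSpace ℝ (Fin k)) : ℝ :=
  ∫ t, Ed V q t

/-- The space `X(σᵢ, σⱼ)` of finite-energy curves from `σᵢ` to `σⱼ`. -/
def InX (V : EuclideanSpace ℝ (Fin k) → ℝ) (σi σj : EuclideanSpace ℝ (Fin k))
    (q : ℝ → EuclideanSpace ℝ (Fin k)) : Prop :=
  AC q ∧ FiniteEnergy V q ∧ Tendsto q atBot (𝓝 σi) ∧ Tendsto q atTop (𝓝 σj)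

/-- Membership in `H¹(ℝ, ℝᵏ)`. -/
def MemH1 (v : ℝ → EuclideanSpace ℝ (Fin k)) : Prop :=
  AC v ∧ MemLp v 2 volume ∧ MemLp (deriv v) 2 volume

/-- The `H¹(ℝ, ℝᵏ)` norm. -/
def H1norm (v : ℝ → EuclideanSpace ℝ (Fin k)) : ℝ :=
  Real.sqrt ((∫ t, ‖v t‖ ^ 2) + ∫ t, ‖deriv v t‖ ^ 2)

/-- Tail of an integrable function is eventually small. -/
lemma aux_tail_small (g : ℝ → ℝ) (hg : Integrable g) :
    ∀ ε > 0, ∃ T : ℝ, ∫ t in Set.Ioi T, g t < ε := by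
  intro ε hε
  have hmono : Monotone (fun n : ℕ => Set.Iic (n : ℝ)) := fun a b hab =>
    Set.Iic_subset_Iic.2 (by exact_mod_cast hab)
  have hunion : (⋃ n : ℕ, Set.Iic (n : ℝ)) = Set.univ := by
    ext x
    simp only [Set.mem_iUnion, Set.mem_Iic, Set.mem_univ, iff_true]
    exact exists_nat_ge x
  have h1 : Tendsto (fun n : ℕ => ∫ t in Set.Iic (n : ℝ), g t) atTop
      (𝓝 (∫ t in (⋃ n : ℕ, Set.Iic (n : ℝ)), g t)) :=
    tendsto_setIntegral_of_monotone (fun _ => measurableSet_Iic) hmono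
      (by rw [hunion]; exact hg.integrableOn)
  rw [hunion, MeasureTheory.setIntegral_univ] at h1
  obtain ⟨n, hn⟩ :=
    (h1.eventually (eventually_gt_nhds (by linarith : (∫ t, g t) - ε < ∫ t, g t))).exists
  refine ⟨n, ?_⟩
  have hsplit : (∫ t in Set.Iic (n : ℝ), g t) + ∫ t in Set.Ioi (n : ℝ), g t = ∫ t, g t := by
    have := MeasureTheory.integral_add_compl (measurableSet_Iic (a := (n : ℝ))) hg
    rwa [Set.compl_Iic] at this
  linarith

/-- A finite set admits a uniform separation constant. -/
lemma aux_exists_sep {E : Type*} [NormedAddCommGroup E] (S : Set E) (hS : S.Finite) :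
    ∃ ε₀ > 0, ∀ σ ∈ S, ∀ σ' ∈ S, σ ≠ σ' → 3 * ε₀ ≤ dist σ σ' := by
  classical
  set F := hS.toFinset with hF
  set D := ((F ×ˢ F).filter fun p => p.1 ≠ p.2).image (fun p => dist p.1 p.2) with hD
  by_cases hne : D.Nonempty
  · have hmem : D.min' hne ∈ D := D.min'_mem hne
    simp only [hD, Finset.mem_image, Finset.mem_filter, Finset.mem_product] at hmem
    obtain ⟨⟨a, b⟩, ⟨⟨_, _⟩, hab⟩, hd⟩ := hmem
    have hpos : 0 < D.min' hne := by rw [← hd]; exact dist_pos.2 hab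
    refine ⟨D.min' hne / 3, by linarith, fun σ hσ σ' hσ' hne' => ?_⟩
    have hmem' : dist σ σ' ∈ D := by
      simp only [hD, Finset.mem_image, Finset.mem_filter, Finset.mem_product]
      exact ⟨(σ, σ'), ⟨⟨hS.mem_toFinset.2 hσ, hS.mem_toFinset.2 hσ'⟩, hne'⟩, rfl⟩
    have := D.min'_le _ hmem'
    linarith
  · refine ⟨1, one_pos, fun σ hσ σ' hσ' hne' => absurd ?_ hne⟩
    refine ⟨dist σ σ', ?_⟩
    simp only [hD, Finset.mem_image, Finset.mem_filter, Finset.mem_product]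
    exact ⟨(σ, σ'), ⟨⟨hS.mem_toFinset.2 hσ, hS.mem_toFinset.2 hσ'⟩, hne'⟩, rfl⟩

/-- Away from the zero set, `V` is uniformly bounded below. -/
lemma aux_away (V : EuclideanSpace ℝ (Fin k) → ℝ) (hVc : Continuous V) (hVnn : ∀ u, 0 ≤ V u)
    (S : Set (EuclideanSpace ℝ (Fin k))) (hSzero : ∀ u, V u = 0 ↔ u ∈ S)
    (β₀ R₀ : ℝ) (hβ₀ : 0 < β₀)
    (hcoer : ∀ u, R₀ ≤ ‖u‖ → β₀ ≤ V u) :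
    ∀ ε > 0, ∃ m > 0, ∀ u, (∀ σ ∈ S, ε ≤ dist u σ) → m ≤ V u := by
  intro ε hε
  set K := Metric.closedBall (0 : EuclideanSpace ℝ (Fin k)) R₀ ∩
    {u | ∀ σ ∈ S, ε ≤ dist u σ} with hK
  have hclosed : IsClosed {u : EuclideanSpace ℝ (Fin k) | ∀ σ ∈ S, ε ≤ dist u σ} := by
    have : {u : EuclideanSpace ℝ (Fin k) | ∀ σ ∈ S, ε ≤ dist u σ} =
        ⋂ σ ∈ S, {u | ε ≤ dist u σ} := by ext u; simp
    rw [this]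
    exact isClosed_biInter fun σ _ =>
      isClosed_le continuous_const (continuous_id.dist continuous_const)
  have hKc : IsCompact K := (isCompact_closedBall _ _).inter_right hclosed
  by_cases hne : K.Nonempty
  · obtain ⟨u₀, hu₀K, hu₀min⟩ := hKc.exists_isMinOn hne hVc.continuousOn
    have hpos : 0 < V u₀ := by
      rcases (hVnn u₀).lt_or_eq with h | h
      · exact h
      · exfalso
        have hu₀S : u₀ ∈ S := (hSzero u₀).1 h.symm
        have := hu₀K.2 u₀ hu₀S
        simp at this
        linarith
    refine ⟨min β₀ (V u₀), lt_min hβ₀ hpos, fun u hu => ?_⟩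
    by_cases hu' : ‖u‖ ≤ R₀
    · have huK : u ∈ K := ⟨by simpa [mem_closedBall_zero_iff] using hu', hu⟩
      exact (min_le_right _ _).trans (hu₀min huK)
    · exact (min_le_left _ _).trans (hcoer u (le_of_not_ge hu'))
  · refine ⟨β₀, hβ₀, fun u hu => ?_⟩
    by_cases hu' : ‖u‖ ≤ R₀
    · exact absurd ⟨u, ⟨by simpa [mem_closedBall_zero_iff] using hu', hu⟩⟩ hne
    · exact hcoer u (le_of_not_ge hu')

/-- Core convergence lemma at `+∞`. -/
lemma aux_core {E : Type*} [NormedAddCommGroup E] (q : ℝ → E) (S : Set E) (hqc : Continuous q)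
    (g h : ℝ → ℝ) (hg : Integrable g) (hh : Integrable h)
    (hg0 : ∀ t, 0 ≤ g t) (hh0 : ∀ t, 0 ≤ h t)
    (hVg : ∀ ε : ℝ, 0 < ε → ∃ m, 0 < m ∧ ∀ t, (∀ σ ∈ S, ε ≤ dist (q t) σ) → m ≤ g t)
    (hdisp : ∀ s t : ℝ, s ≤ t →
      ‖q t - q s‖ ≤ (1/2) * (∫ u in s..t, h u) + (t - s)/2)
    (hsep : ∃ ε₀ > 0, ∀ σ ∈ S, ∀ σ' ∈ S, σ ≠ σ' → 3 * ε₀ ≤ dist σ σ') :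
    ∃ σ ∈ S, Tendsto q atTop (𝓝 σ) := by
  have step1 : ∀ ε > 0, ∃ T : ℝ, ∀ s ≥ T, ∃ σ ∈ S, dist (q s) σ < ε := by
    intro ε hε
    obtain ⟨m, hm, hmg⟩ := hVg (ε/2) (by linarith)
    set δ := ε/2 with hδ
    have hδpos : 0 < δ := by rw [hδ]; linarith
    obtain ⟨T₁, hT₁⟩ := aux_tail_small h hh (ε/2) (by linarith)
    obtain ⟨T₂, hT₂⟩ := aux_tail_small g hg (m * δ) (by positivity)
    refine ⟨max T₁ T₂, fun s hs => ?_⟩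
    by_contra hcon
    push_neg at hcon
    have key : ∀ u ∈ Set.Ioc s (s + δ), m ≤ g u := by
      intro u hu
      apply hmg
      intro σ hσ
      have h1 : ‖q u - q s‖ ≤ (1/2) * (∫ v in s..u, h v) + (u - s)/2 := hdisp s u hu.1.le
      have h2 : ∫ v in s..u, h v ≤ ∫ v in Set.Ioi T₁, h v := by
        rw [intervalIntegral.integral_of_le hu.1.le]
        refine setIntegral_mono_set hh.integrableOn
          (Filter.Eventually.of_forall fun t => hh0 t) ?_
        exact (Set.Ioc_subset_Ioi_self.trans
          (Set.Ioi_subset_Ioi (le_trans (le_max_left _ _) hs))).eventuallyLE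
      have h3 : ‖q u - q s‖ ≤ ε/2 := by
        have hu2 : u - s ≤ δ := by linarith [hu.2]
        calc ‖q u - q s‖ ≤ (1/2) * (∫ v in s..u, h v) + (u - s)/2 := h1
          _ ≤ (1/2) * (ε/2) + δ/2 := by
              have := le_of_lt (lt_of_le_of_lt h2 hT₁)
              gcongr
          _ ≤ ε/2 := by rw [hδ]; ring_nf; linarith
      have h4 : ε ≤ dist (q s) σ := hcon σ hσ
      have htri : dist (q s) σ ≤ dist (q s) (q u) + dist (q u) σ := dist_triangle _ _ _
      have hd : dist (q s) (q u) = ‖q u - q s‖ := by rw [dist_eq_norm, norm_sub_rev]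
      linarith
    have hlb : m * δ ≤ ∫ u in Set.Ioc s (s + δ), g u := by
      have := setIntegral_ge_of_const_le_real measurableSet_Ioc
        (measure_Ioc_lt_top).ne key hg.integrableOn
      have hvol : (volume (Set.Ioc s (s + δ))).toReal = δ := by
        rw [Real.volume_Ioc]
        simp [ENNReal.toReal_ofReal hδpos.le]
      rw [measureReal_def, hvol] at this
      exact this
    have hub : ∫ u in Set.Ioc s (s + δ), g u ≤ ∫ u in Set.Ioi T₂, g u := by
      refine setIntegral_mono_set hg.integrableOn
        (Filter.Eventually.of_forall fun t => hg0 t) ?_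
      exact (Set.Ioc_subset_Ioi_self.trans
        (Set.Ioi_subset_Ioi (le_trans (le_max_right _ _) hs))).eventuallyLE
    linarith
  obtain ⟨ε₀, hε₀, hsep'⟩ := hsep
  obtain ⟨T₀, hT₀⟩ := step1 ε₀ hε₀
  obtain ⟨σp, hσpS, hσp⟩ := hT₀ T₀ le_rfl
  refine ⟨σp, hσpS, ?_⟩
  have claimA : ∀ t ≥ T₀, dist (q t) σp < ε₀ := by
    intro t ht
    have hpre : IsPreconnected (q '' Set.Icc T₀ t) :=
      isPreconnected_Icc.image q hqc.continuousOn
    have hdisj : Disjoint (Metric.ball σp ε₀) (⋃ σ ∈ S \ {σp}, Metric.ball σ ε₀) := by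
      rw [Set.disjoint_left]
      intro x hxU hxW
      simp only [Set.mem_iUnion, Set.mem_diff, Set.mem_singleton_iff, exists_prop] at hxW
      obtain ⟨σ, ⟨hσS, hσne⟩, hx⟩ := hxW
      have h3 := hsep' σ hσS σp hσpS hσne
      rw [Metric.mem_ball] at hxU hx
      have : dist σ σp ≤ dist x σ + dist x σp := dist_triangle_left _ _ _
      linarith
    have hsub : q '' Set.Icc T₀ t ⊆
        Metric.ball σp ε₀ ∪ ⋃ σ ∈ S \ {σp}, Metric.ball σ ε₀ := by
      rintro x ⟨u, hu, rfl⟩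
      obtain ⟨σ, hσS, hσd⟩ := hT₀ u hu.1
      by_cases hc : σ = σp
      · left; rw [Metric.mem_ball]; rw [hc] at hσd; exact hσd
      · right
        simp only [Set.mem_iUnion, Set.mem_diff, Set.mem_singleton_iff, exists_prop]
        exact ⟨σ, ⟨hσS, hc⟩, Metric.mem_ball.2 hσd⟩
    have hne : (q '' Set.Icc T₀ t ∩ Metric.ball σp ε₀).Nonempty :=
      ⟨q T₀, ⟨T₀, ⟨le_rfl, ht⟩, rfl⟩, Metric.mem_ball.2 hσp⟩
    have hfin := hpre.subset_left_of_subset_union Metric.isOpen_ball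
      (isOpen_biUnion fun _ _ => Metric.isOpen_ball) hdisj hsub hne
    exact Metric.mem_ball.1 (hfin ⟨t, ⟨ht, le_rfl⟩, rfl⟩)
  rw [Metric.tendsto_atTop]
  intro ε hε
  obtain ⟨T₁, hT₁⟩ := step1 (min ε ε₀) (lt_min hε hε₀)
  refine ⟨max T₀ T₁, fun t ht => ?_⟩
  obtain ⟨σ, hσS, hσd⟩ := hT₁ t (le_trans (le_max_right _ _) ht)
  have hA := claimA t (le_trans (le_max_left _ _) ht)
  have hσeq : σ = σp := by
    by_contra hc
    have h3 := hsep' σ hσS σp hσpS hc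
    have h1 : dist σ σp ≤ dist (q t) σ + dist (q t) σp := dist_triangle_left _ _ _
    have h2 : dist (q t) σ < ε₀ := lt_of_lt_of_le hσd (min_le_right _ _)
    linarith
  rw [hσeq] at hσd
  exact lt_of_lt_of_le hσd (min_le_left _ _)

theorem stmt_3 (V : EuclideanSpace ℝ (Fin k) → ℝ)
    (hV : ContDiff ℝ 2 V) (hVnn : ∀ u, 0 ≤ V u)
    (S : Set (EuclideanSpace ℝ (Fin k))) (hSfin : S.Finite)
    (hSzero : ∀ u, V u = 0 ↔ u ∈ S)
    (hhess : ∀ σ ∈ S, ∀ u : EuclideanSpace ℝ (Fin k), u ≠ 0 →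
      0 < iteratedFDeriv ℝ 2 V σ ![u, u])
    (α₀ β₀ R₀ : ℝ) (hα₀ : 0 < α₀) (hβ₀ : 0 < β₀) (hR₀ : 0 < R₀)
    (hcoer : ∀ u : EuclideanSpace ℝ (Fin k), R₀ ≤ ‖u‖ →
      α₀ * ‖u‖ ^ 2 ≤ ⟪gradient V u, u⟫ ∧ β₀ ≤ V u)
    (q : ℝ → EuclideanSpace ℝ (Fin k)) (hqc : Continuous q) (hq : AC q)
    (hE : FiniteEnergy V q) :
    ∃ σm ∈ S, ∃ σp ∈ S,
      Tendsto q atBot (𝓝 σm) ∧ Tendsto q atTop (𝓝 σp) := by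
  have hVg := aux_away V hV.continuous hVnn S hSzero β₀ R₀ hβ₀ (fun u hu => (hcoer u hu).2)
  have hsep := aux_exists_sep S hSfin
  -- integrability of the two densities
  have hg_int : Integrable (fun t => V (q t)) volume := by
    refine hE.mono' ((hV.continuous.comp hqc).aestronglyMeasurable) ?_
    filter_upwards with t
    have h1 := hVnn (q t)
    have h2 : (0:ℝ) ≤ ‖deriv q t‖ ^ 2 := sq_nonneg _
    rw [Real.norm_eq_abs, abs_of_nonneg h1]
    unfold Ed; nlinarith
  have hh_int : Integrable (fun t => ‖deriv q t‖ ^ 2) volume := by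
    refine (hE.const_mul 2).mono' (hq.1.aestronglyMeasurable.norm.pow 2) ?_
    filter_upwards with t
    have h1 := hVnn (q t)
    have h2 : (0:ℝ) ≤ ‖deriv q t‖ ^ 2 := sq_nonneg _
    rw [Real.norm_eq_abs, abs_of_nonneg h2]
    unfold Ed; nlinarith
  -- displacement estimate
  have hdisp : ∀ s t : ℝ, s ≤ t →
      ‖q t - q s‖ ≤ (1/2) * (∫ u in s..t, ‖deriv q u‖ ^ 2) + (t - s)/2 := by
    intro s t hst
    have hQ : q t - q s = ∫ u in s..t, deriv q u := hq.2 s t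
    have hIi : IntervalIntegrable (deriv q) volume s t :=
      (intervalIntegrable_iff_integrableOn_Icc_of_le hst).2
        (hq.1.integrableOn_isCompact isCompact_Icc)
    have h1 : ‖q t - q s‖ ≤ ∫ u in s..t, ‖deriv q u‖ := by
      rw [hQ]; exact intervalIntegral.norm_integral_le_integral_norm hst
    have h2 : ∫ u in s..t, ‖deriv q u‖ ≤
        ∫ u in s..t, ((1/2) * ‖deriv q u‖ ^ 2 + 1/2) := by
      refine intervalIntegral.integral_mono_on hst hIi.norm ?_ ?_
      · exact ((hh_int.intervalIntegrable).const_mul _).add intervalIntegrable_const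
      · intro x _
        nlinarith [sq_nonneg (‖deriv q x‖ - 1)]
    have h3 : ∫ u in s..t, ((1/2) * ‖deriv q u‖ ^ 2 + 1/2) =
        (1/2) * (∫ u in s..t, ‖deriv q u‖ ^ 2) + (t - s) * (1/2) := by
      rw [intervalIntegral.integral_add ((hh_int.intervalIntegrable).const_mul _)
        intervalIntegrable_const, intervalIntegral.integral_const_mul,
        intervalIntegral.integral_const, smul_eq_mul]
    rw [h3] at h2
    linarith
  -- convergence at +∞
  have hVg' : ∀ ε : ℝ, 0 < ε → ∃ m, 0 < m ∧
      ∀ t, (∀ σ ∈ S, ε ≤ dist (q t) σ) → m ≤ V (q t) := by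
    intro ε hε
    obtain ⟨m, hm, hmg⟩ := hVg ε hε
    exact ⟨m, hm, fun t ht => hmg (q t) ht⟩
  obtain ⟨σp, hσpS, hσp⟩ := aux_core q S hqc (fun t => V (q t)) (fun t => ‖deriv q t‖ ^ 2)
    hg_int hh_int (fun t => hVnn _) (fun t => sq_nonneg _) hVg' hdisp hsep
  -- convergence at -∞ via reflection
  have hrefl : ∀ f : ℝ → ℝ, Integrable f volume → Integrable (fun t => f (-t)) volume := by
    intro f hf
    exact ((Measure.measurePreserving_neg (volume : Measure ℝ)).integrable_comp_emb
      (MeasurableEquiv.neg ℝ).measurableEmbedding).2 hf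
  have hdispR : ∀ s t : ℝ, s ≤ t →
      ‖q (-t) - q (-s)‖ ≤ (1/2) * (∫ u in s..t, ‖deriv q (-u)‖ ^ 2) + (t - s)/2 := by
    intro s t hst
    have hmain := hdisp (-t) (-s) (neg_le_neg hst)
    rw [norm_sub_rev] at hmain
    have hchg : (∫ u in s..t, ‖deriv q (-u)‖ ^ 2) = ∫ u in (-t)..(-s), ‖deriv q u‖ ^ 2 :=
      intervalIntegral.integral_comp_neg (fun u => ‖deriv q u‖ ^ 2)
    rw [hchg]
    have harith : (-s) - (-t) = t - s := by ring
    rw [harith] at hmain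
    exact hmain
  have hVgR : ∀ ε : ℝ, 0 < ε → ∃ m, 0 < m ∧
      ∀ t, (∀ σ ∈ S, ε ≤ dist (q (-t)) σ) → m ≤ V (q (-t)) := by
    intro ε hε
    obtain ⟨m, hm, hmg⟩ := hVg ε hε
    exact ⟨m, hm, fun t ht => hmg (q (-t)) ht⟩
  obtain ⟨σm, hσmS, hσm⟩ := aux_core (fun t => q (-t)) S (hqc.comp continuous_neg)
    (fun t => V (q (-t))) (fun t => ‖deriv q (-t)‖ ^ 2)
    (hrefl _ hg_int) (hrefl _ hh_int) (fun t => hVnn _) (fun t => sq_nonneg _)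
    hVgR hdispR hsep
  refine ⟨σm, hσmS, σp, hσpS, ?_, hσp⟩
  have hneg : Tendsto (fun t : ℝ => -t) atBot atTop := tendsto_neg_atBot_atTop
  have h := hσm.comp hneg
  have heq : ((fun t => q (-t)) ∘ fun t : ℝ => -t) = q := by
    funext t; simp
  rwa [heq] at h
end
end

section
/- Let σᵢ, σⱼ be zeros of V and let q, q̃ : ℝ → ℝ^k both lie in X(σᵢ, σⱼ), i.e. they are H¹_loc with finite energy E < ∞ and tend to σᵢ at -∞ and σⱼ at +∞. Then q - q̃ belongs to H¹(ℝ, ℝ^k). Conversely, if q ∈ X(σᵢ, σⱼ) and v ∈ H¹(ℝ, ℝ^k), then q + v ∈ X(σᵢ, σⱼ). -/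
open MeasureTheory Filter intervalIntegral
open scoped RealInnerProductSpace Topology

noncomputable section

variable {k : ℕ}

variable {q qt v : ℝ → EuclideanSpace ℝ (Fin k)}

lemma AC.intervalIntegrable (h : AC q) (a b : ℝ) :
    IntervalIntegrable (deriv q) volume a b :=
  (h.1.integrableOn_isCompact isCompact_uIcc).intervalIntegrable

lemma AC.continuous (h : AC q) : Continuous q := by
  have hq : ∀ x, q x = q 0 + ∫ t in (0:ℝ)..x, deriv q t := by
    intro x
    have := h.2 0 x
    rw [← this]; abel
  rw [funext hq]
  exact continuous_const.add (intervalIntegral.continuous_primitive h.intervalIntegrable 0)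

lemma uIcc_subset_closedBall (x x' : ℝ) : Set.uIcc x x' ⊆ Metric.closedBall x |x' - x| := by
  intro t ht
  rw [Metric.mem_closedBall, Real.dist_eq]
  rw [Set.uIcc_eq_union] at ht
  rcases ht with ht | ht
  · rw [Set.mem_Icc] at ht
    rw [abs_le]
    constructor
    · linarith [abs_nonneg (x' - x), neg_abs_le (x' - x), ht.1]
    · linarith [abs_nonneg (x' - x), le_abs_self (x' - x), ht.2]
  · rw [Set.mem_Icc] at ht
    rw [abs_le]
    constructor
    · linarith [abs_nonneg (x' - x), neg_abs_le (x' - x), ht.1]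
    · linarith [abs_nonneg (x' - x), le_abs_self (x' - x), ht.2]

lemma AC.ae_hasDerivAt (h : AC q) : ∀ᵐ t, HasDerivAt q (deriv q t) t := by
  filter_upwards [IsUnifLocDoublingMeasure.ae_tendsto_average_norm_sub (μ := volume) h.1 1]
    with x hx
  set f := deriv q with hf
  set A : ℝ → ℝ := fun x' => ⨍ y in Metric.closedBall x |x' - x|, ‖f y - f x‖ with hA_def
  have hA : Tendsto A (𝓝[≠] x) (𝓝 0) := by
    apply hx (fun _ => x) (fun x' => |x' - x|)
    · refine tendsto_nhdsWithin_iff.2 ⟨?_, ?_⟩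
      · have : Tendsto (fun x' : ℝ => |x' - x|) (𝓝 x) (𝓝 |x - x|) :=
          ((continuous_id.sub continuous_const).abs).continuousAt
        simpa using this.mono_left nhdsWithin_le_nhds
      · filter_upwards [self_mem_nhdsWithin] with y hy
        exact Set.mem_Ioi.2 (abs_pos.2 (sub_ne_zero.2 hy))
    · filter_upwards with y
      simp
  rw [hasDerivAt_iff_tendsto_slope]
  rw [tendsto_iff_norm_sub_tendsto_zero]
  have hbound : ∀ x' ∈ ({x}ᶜ : Set ℝ), ‖slope q x x' - f x‖ ≤ 2 * A x' := by
    intro x' hx'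
    have hx'ne : x' ≠ x := hx'
    have hr : (0:ℝ) < |x' - x| := abs_pos.2 (sub_ne_zero.2 hx'ne)
    -- rewrite slope difference as an integral
    have h1 : q x' - q x = ∫ t in x..x', f t := h.2 x x'
    have h2 : (x' - x) • f x = ∫ t in x..x', f x := by
      rw [intervalIntegral.integral_const]
    have h3 : q x' - q x - (x' - x) • f x = ∫ t in x..x', (f t - f x) := by
      rw [intervalIntegral.integral_sub (h.intervalIntegrable x x')
        (intervalIntegrable_const), h1, h2]
    have h4 : slope q x x' - f x = (x' - x)⁻¹ • (q x' - q x - (x' - x) • f x) := by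
      conv_rhs => rw [smul_sub, smul_smul, inv_mul_cancel₀ (sub_ne_zero.2 hx'ne), one_smul]
      rw [slope_def_module]
    have hball : IntegrableOn (fun t => ‖f t - f x‖) (Metric.closedBall x |x' - x|) volume :=
      ((h.1.sub (locallyIntegrable_const _)).integrableOn_isCompact
        (isCompact_closedBall _ _)).norm
    have h5 : ‖∫ t in x..x', (f t - f x)‖ ≤ ∫ t in Metric.closedBall x |x' - x|, ‖f t - f x‖ := by
      refine (intervalIntegral.norm_integral_le_integral_norm_uIoc).trans ?_
      apply setIntegral_mono_set hball
      · filter_upwards with t using norm_nonneg _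
      · exact Filter.Eventually.of_forall
          ((Set.uIoc_subset_uIcc).trans (uIcc_subset_closedBall x x'))
    have h6 : ∫ t in Metric.closedBall x |x' - x|, ‖f t - f x‖ = (2 * |x' - x|) * A x' := by
      show _ = (2 * |x' - x|) * ⨍ y in Metric.closedBall x |x' - x|, ‖f y - f x‖
      rw [setAverage_eq]
      rw [Real.volume_real_closedBall (by positivity)]
      rw [smul_eq_mul, ← mul_assoc, mul_inv_cancel₀ (by positivity), one_mul]
    calc ‖slope q x x' - f x‖ = |x' - x|⁻¹ * ‖q x' - q x - (x' - x) • f x‖ := by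
          rw [h4, norm_smul, norm_inv, Real.norm_eq_abs]
      _ ≤ |x' - x|⁻¹ * ((2 * |x' - x|) * A x') := by
          apply mul_le_mul_of_nonneg_left _ (by positivity)
          rw [h3, ← h6]; exact h5
      _ = 2 * A x' := by field_simp
  have h2A : Tendsto (fun x' => 2 * A x') (𝓝[≠] x) (𝓝 0) := by
    simpa using hA.const_mul 2
  apply squeeze_zero' _ _ h2A
  · filter_upwards with t using norm_nonneg _
  · filter_upwards [self_mem_nhdsWithin] with t ht using hbound t ht

lemma LocallyIntegrable.congr_ae {f g : ℝ → EuclideanSpace ℝ (Fin k)}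
    (hf : MeasureTheory.LocallyIntegrable f volume) (h : f =ᵐ[volume] g) :
    MeasureTheory.LocallyIntegrable g volume := by
  rw [MeasureTheory.locallyIntegrable_iff] at *
  exact fun K hK => ((hf K hK).congr (ae_restrict_of_ae h))

lemma AC.deriv_sub_ae (hq : AC q) (hqt : AC qt) :
    deriv (q - qt) =ᵐ[volume] fun t => deriv q t - deriv qt t := by
  filter_upwards [hq.ae_hasDerivAt, hqt.ae_hasDerivAt] with t h1 h2
  exact (h1.sub h2).deriv

lemma AC.deriv_add_ae (hq : AC q) (hv : AC v) :
    deriv (q + v) =ᵐ[volume] fun t => deriv q t + deriv v t := by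
  filter_upwards [hq.ae_hasDerivAt, hv.ae_hasDerivAt] with t h1 h2
  exact (h1.add h2).deriv

lemma AC.sub (hq : AC q) (hqt : AC qt) : AC (q - qt) := by
  have hcong := hq.deriv_sub_ae hqt
  refine ⟨LocallyIntegrable.congr_ae (hq.1.sub hqt.1) hcong.symm, fun a b => ?_⟩
  have h1 : (∫ t in a..b, deriv (q - qt) t) = ∫ t in a..b, (deriv q t - deriv qt t) := by
    apply intervalIntegral.integral_congr_ae
    filter_upwards [hcong] with t ht _ using ht
  rw [h1, intervalIntegral.integral_sub (hq.intervalIntegrable a b)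
    (hqt.intervalIntegrable a b), ← hq.2 a b, ← hqt.2 a b]
  simp only [Pi.sub_apply]
  abel

lemma AC.add (hq : AC q) (hv : AC v) : AC (q + v) := by
  have hcong := hq.deriv_add_ae hv
  refine ⟨LocallyIntegrable.congr_ae (hq.1.add hv.1) hcong.symm, fun a b => ?_⟩
  have h1 : (∫ t in a..b, deriv (q + v) t) = ∫ t in a..b, (deriv q t + deriv v t) := by
    apply intervalIntegral.integral_congr_ae
    filter_upwards [hcong] with t ht _ using ht
  rw [h1, intervalIntegral.integral_add (hq.intervalIntegrable a b)
    (hv.intervalIntegrable a b), ← hq.2 a b, ← hv.2 a b]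
  simp only [Pi.add_apply]
  abel

variable {V : EuclideanSpace ℝ (Fin k) → ℝ}

lemma Ed_nonneg (hVnn : ∀ u, 0 ≤ V u) (t : ℝ) : 0 ≤ Ed V q t :=
  add_nonneg (by positivity) (hVnn _)

lemma integrable_sq_norm_deriv (hq : AC q) (hE : FiniteEnergy V q) (hVnn : ∀ u, 0 ≤ V u) :
    Integrable (fun t => ‖deriv q t‖ ^ 2) volume := by
  have hm : AEStronglyMeasurable (deriv q) volume := hq.1.aestronglyMeasurable
  refine Integrable.mono' (hE.const_mul 2) ?_ ?_
  · have : AEStronglyMeasurable (fun t => ‖deriv q t‖ * ‖deriv q t‖) volume :=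
      hm.norm.mul hm.norm
    simpa [pow_two] using this
  · filter_upwards with t
    rw [Real.norm_eq_abs, abs_of_nonneg (by positivity)]
    have := hVnn (q t)
    simp only [Ed]
    nlinarith [sq_nonneg ‖deriv q t‖]

lemma integrable_V_comp (hq : AC q) (hE : FiniteEnergy V q) (hVc : Continuous V)
    (hVnn : ∀ u, 0 ≤ V u) : Integrable (fun t => V (q t)) volume := by
  refine Integrable.mono' hE ((hVc.comp hq.continuous).aestronglyMeasurable) ?_
  filter_upwards with t
  rw [Real.norm_eq_abs, abs_of_nonneg (hVnn _)]
  simp only [Ed]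
  nlinarith [sq_nonneg ‖deriv q t‖]

lemma memLp_deriv (hq : AC q) (hE : FiniteEnergy V q) (hVnn : ∀ u, 0 ≤ V u) :
    MemLp (deriv q) 2 volume :=
  (memLp_two_iff_integrable_sq_norm hq.1.aestronglyMeasurable).2
    (integrable_sq_norm_deriv hq hE hVnn)

lemma line_hasDerivAt (hV : ContDiff ℝ 2 V) (x h : EuclideanSpace ℝ (Fin k)) (s : ℝ) :
    HasDerivAt (fun s : ℝ => V (x + s • h)) (fderiv ℝ V (x + s • h) h) s := by
  have hd : HasFDerivAt V (fderiv ℝ V (x + s • h)) (x + s • h) :=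
    (hV.differentiable (by norm_num) _).hasFDerivAt
  have hline : HasDerivAt (fun s : ℝ => x + s • h) h s := by
    simpa using ((hasDerivAt_id s).smul_const h).const_add x
  exact hd.comp_hasDerivAt s hline

lemma line2_hasDerivAt (hV : ContDiff ℝ 2 V) (x h : EuclideanSpace ℝ (Fin k)) (s : ℝ) :
    HasDerivAt (fun s : ℝ => fderiv ℝ V (x + s • h) h)
      (iteratedFDeriv ℝ 2 V (x + s • h) ![h, h]) s := by
  have hG : ContDiff ℝ 1 (fderiv ℝ V) := hV.fderiv_right (by norm_num)
  have hd : HasFDerivAt (fderiv ℝ V) (fderiv ℝ (fderiv ℝ V) (x + s • h)) (x + s • h) :=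
    (hG.differentiable one_ne_zero _).hasFDerivAt
  have hline : HasDerivAt (fun s : ℝ => x + s • h) h s := by
    simpa using ((hasDerivAt_id s).smul_const h).const_add x
  have hcomp : HasDerivAt (fun s : ℝ => fderiv ℝ V (x + s • h))
      (fderiv ℝ (fderiv ℝ V) (x + s • h) h) s := by
    exact hd.comp_hasDerivAt s hline
  have hres := hcomp.clm_apply (hasDerivAt_const s h)
  rw [iteratedFDeriv_two_apply]
  simpa using hres

lemma cont_hess_line (hV : ContDiff ℝ 2 V) (x h : EuclideanSpace ℝ (Fin k)) :
    Continuous fun s : ℝ => iteratedFDeriv ℝ 2 V (x + s • h) ![h, h] := by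
  have h1 : Continuous (iteratedFDeriv ℝ 2 V) :=
    hV.continuous_iteratedFDeriv (by exact_mod_cast le_rfl)
  exact (continuous_eval_const ![h, h]).comp
    (h1.comp (continuous_const.add (continuous_id.smul continuous_const)))

lemma taylor2_identity (hV : ContDiff ℝ 2 V) (x h : EuclideanSpace ℝ (Fin k)) :
    V (x + h) = V x + fderiv ℝ V x h
      + ∫ s in (0:ℝ)..1, (1 - s) * iteratedFDeriv ℝ 2 V (x + s • h) ![h, h] := by
  have hψ : ∀ s ∈ Set.uIcc (0:ℝ) 1, HasDerivAt
      (fun s : ℝ => V (x + s • h) + (1 - s) * fderiv ℝ V (x + s • h) h)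
      ((1 - s) * iteratedFDeriv ℝ 2 V (x + s • h) ![h, h]) s := by
    intro s _
    have h1 := line_hasDerivAt hV x h s
    have h2 := ((hasDerivAt_const s (1:ℝ)).sub (hasDerivAt_id s)).mul
      (line2_hasDerivAt hV x h s)
    convert h1.add h2 using 1
    · rfl
    · rfl
    · rfl
    · simp only [Pi.sub_apply, id_eq]
      ring
  have hint : IntervalIntegrable
      (fun s : ℝ => (1 - s) * iteratedFDeriv ℝ 2 V (x + s • h) ![h, h]) volume 0 1 :=
    ((continuous_const.sub continuous_id).mul (cont_hess_line hV x h)).intervalIntegrable 0 1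
  have hFTC := intervalIntegral.integral_eq_sub_of_hasDerivAt hψ hint
  rw [hFTC]
  simp only [one_smul, zero_smul, add_zero, sub_self, zero_mul, sub_zero, one_mul]
  ring

lemma quad_lower (hV : ContDiff ℝ 2 V) (hVnn : ∀ u, 0 ≤ V u)
    (σ : EuclideanSpace ℝ (Fin k)) (hσ : V σ = 0)
    (hpos : ∀ u : EuclideanSpace ℝ (Fin k), u ≠ 0 → 0 < iteratedFDeriv ℝ 2 V σ ![u, u]) :
    ∃ r > (0:ℝ), ∃ c > (0:ℝ), ∀ x ∈ Metric.closedBall σ r, c * ‖x - σ‖ ^ 2 ≤ V x := by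
  have hfd : fderiv ℝ V σ = 0 := by
    have hmin : IsLocalMin V σ := Filter.Eventually.of_forall fun y => by
      rw [hσ]; exact hVnn y
    exact hmin.fderiv_eq_zero
  by_cases hk : ∃ u : EuclideanSpace ℝ (Fin k), u ≠ 0
  · obtain ⟨u₀, hu₀⟩ := hk
    have hsph : (Metric.sphere (0 : EuclideanSpace ℝ (Fin k)) 1).Nonempty := by
      refine ⟨‖u₀‖⁻¹ • u₀, ?_⟩
      rw [mem_sphere_zero_iff_norm]
      exact norm_smul_inv_norm hu₀
    have hcont0 : Continuous fun u : EuclideanSpace ℝ (Fin k) =>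
        iteratedFDeriv ℝ 2 V σ ![u, u] := by
      apply (iteratedFDeriv ℝ 2 V σ).coe_continuous.comp
      apply continuous_pi
      intro i
      fin_cases i <;> exact continuous_id
    obtain ⟨u₁, hu₁s, hu₁min⟩ :=
      (isCompact_sphere (0 : EuclideanSpace ℝ (Fin k)) 1).exists_isMinOn hsph
        hcont0.continuousOn
    set m := iteratedFDeriv ℝ 2 V σ ![u₁, u₁] with hm
    have hu₁ : u₁ ≠ 0 := by
      intro h0
      rw [h0, mem_sphere_zero_iff_norm] at hu₁s
      simp at hu₁s
    have hmpos : 0 < m := hpos u₁ hu₁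
    have hcontT : ContinuousAt (iteratedFDeriv ℝ 2 V) σ :=
      (hV.continuous_iteratedFDeriv (by exact_mod_cast le_rfl)).continuousAt
    obtain ⟨r, hr, hball⟩ : ∃ r > (0:ℝ), ∀ x ∈ Metric.closedBall σ r,
        ‖iteratedFDeriv ℝ 2 V x - iteratedFDeriv ℝ 2 V σ‖ ≤ m / 2 := by
      obtain ⟨ε, hε, hd⟩ := Metric.continuousAt_iff.1 hcontT (m / 2) (by positivity)
      refine ⟨ε / 2, by positivity, fun x hx => ?_⟩
      have h1 : dist x σ < ε := lt_of_le_of_lt (Metric.mem_closedBall.1 hx) (by linarith)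
      have h2 := hd h1
      rw [dist_eq_norm] at h2
      exact h2.le
    have hHess : ∀ x ∈ Metric.closedBall σ r, ∀ h : EuclideanSpace ℝ (Fin k),
        m / 2 * ‖h‖ ^ 2 ≤ iteratedFDeriv ℝ 2 V x ![h, h] := by
      intro x hx h
      rcases eq_or_ne h 0 with rfl | hh
      · have hz : iteratedFDeriv ℝ 2 V x ![(0:EuclideanSpace ℝ (Fin k)), 0] = 0 :=
          (iteratedFDeriv ℝ 2 V x).map_coord_zero 0 (by simp)
        simp [hz]
      · set u : EuclideanSpace ℝ (Fin k) := ‖h‖⁻¹ • h with hu_def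
        have hun : ‖u‖ = 1 := norm_smul_inv_norm hh
        have hsm : ‖h‖ • u = h := by
          rw [hu_def, smul_smul, mul_inv_cancel₀ (norm_ne_zero_iff.2 hh), one_smul]
        have hrepr : (![h, h] : Fin 2 → EuclideanSpace ℝ (Fin k))
            = fun i => ‖h‖ • (![u, u] i) := by
          funext i
          fin_cases i <;> simp [hsm]
        have hσh : iteratedFDeriv ℝ 2 V σ ![h, h]
            = ‖h‖ ^ 2 * iteratedFDeriv ℝ 2 V σ ![u, u] := by
          rw [hrepr, ContinuousMultilinearMap.map_smul_univ]
          simp [smul_eq_mul, pow_two]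
        have hdiff : |iteratedFDeriv ℝ 2 V x ![h, h] - iteratedFDeriv ℝ 2 V σ ![h, h]|
            ≤ m / 2 * ‖h‖ ^ 2 := by
          have h1 : iteratedFDeriv ℝ 2 V x ![h, h] - iteratedFDeriv ℝ 2 V σ ![h, h]
              = (iteratedFDeriv ℝ 2 V x - iteratedFDeriv ℝ 2 V σ) ![h, h] := by
            simp [ContinuousMultilinearMap.sub_apply]
          rw [h1, ← Real.norm_eq_abs]
          refine ((iteratedFDeriv ℝ 2 V x - iteratedFDeriv ℝ 2 V σ).le_opNorm _).trans ?_
          have h2 : (∏ i : Fin 2, ‖(![h, h] : Fin 2 → EuclideanSpace ℝ (Fin k)) i‖)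
              = ‖h‖ ^ 2 := by
            rw [Fin.prod_univ_two]
            simp [pow_two]
          rw [h2]
          exact mul_le_mul_of_nonneg_right (hball x hx) (by positivity)
        have hminu : m ≤ iteratedFDeriv ℝ 2 V σ ![u, u] :=
          (isMinOn_iff.1 hu₁min) u ((mem_sphere_zero_iff_norm).2 hun)
        have h3 : m * ‖h‖ ^ 2 ≤ iteratedFDeriv ℝ 2 V σ ![h, h] := by
          rw [hσh]
          nlinarith [sq_nonneg ‖h‖]
        nlinarith [abs_le.1 hdiff]
    refine ⟨r, hr, m / 4, by positivity, fun x hx => ?_⟩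
    have ht := taylor2_identity hV σ (x - σ)
    rw [hσ, hfd] at ht
    simp only [add_sub_cancel, ContinuousLinearMap.zero_apply, zero_add, add_zero] at ht
    have hxmem : ∀ s ∈ Set.Icc (0:ℝ) 1, σ + s • (x - σ) ∈ Metric.closedBall σ r := by
      intro s hs
      rw [Metric.mem_closedBall, dist_eq_norm, add_sub_cancel_left, norm_smul,
        Real.norm_eq_abs, abs_of_nonneg hs.1]
      have hxr : ‖x - σ‖ ≤ r := by
        rw [← dist_eq_norm]
        exact Metric.mem_closedBall.1 hx
      nlinarith [norm_nonneg (x - σ), hs.2]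
    have hint2 : IntervalIntegrable
        (fun s : ℝ => (1 - s) * iteratedFDeriv ℝ 2 V (σ + s • (x - σ)) ![x - σ, x - σ])
        volume 0 1 :=
      ((continuous_const.sub continuous_id).mul (cont_hess_line hV σ (x - σ))).intervalIntegrable 0 1
    have hint1 : IntervalIntegrable
        (fun s : ℝ => (1 - s) * (m / 2 * ‖x - σ‖ ^ 2)) volume 0 1 :=
      ((continuous_const.sub continuous_id).mul continuous_const).intervalIntegrable 0 1
    have hmono : (∫ s in (0:ℝ)..1, (1 - s) * (m / 2 * ‖x - σ‖ ^ 2))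
        ≤ ∫ s in (0:ℝ)..1, (1 - s) * iteratedFDeriv ℝ 2 V (σ + s • (x - σ)) ![x - σ, x - σ] := by
      apply intervalIntegral.integral_mono_on zero_le_one hint1 hint2
      intro s hs
      have h1 := hHess _ (hxmem s hs) (x - σ)
      have h2 : (0:ℝ) ≤ 1 - s := by linarith [hs.2]
      exact mul_le_mul_of_nonneg_left h1 h2
    have hval : (∫ s in (0:ℝ)..1, (1 - s) * (m / 2 * ‖x - σ‖ ^ 2))
        = m / 4 * ‖x - σ‖ ^ 2 := by
      rw [intervalIntegral.integral_mul_const]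
      have : (∫ s in (0:ℝ)..1, (1 - s)) = 1 / 2 := by
        rw [intervalIntegral.integral_sub intervalIntegrable_const
          (intervalIntegral.intervalIntegrable_id)]
        simp [integral_id]
        norm_num
      rw [this]
      ring
    rw [ht]
    rw [hval] at hmono
    exact hmono
  · push_neg at hk
    refine ⟨1, one_pos, 1, one_pos, fun x _ => ?_⟩
    have hx0 : x - σ = 0 := hk _
    have hxσ : x = σ := sub_eq_zero.1 hx0
    rw [hx0, hxσ, hσ]
    simp

lemma fderiv_lip (hV : ContDiff ℝ 2 V) (s : Set (EuclideanSpace ℝ (Fin k)))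
    (hconv : Convex ℝ s) (hcomp : IsCompact s) :
    ∃ M : ℝ, 0 ≤ M ∧ ∀ x ∈ s, ∀ y ∈ s, ‖fderiv ℝ V y - fderiv ℝ V x‖ ≤ M * ‖y - x‖ := by
  have hG : ContDiff ℝ 1 (fderiv ℝ V) := hV.fderiv_right (by norm_num)
  obtain ⟨C, hC⟩ := hcomp.exists_bound_of_continuousOn
    (hG.continuous_fderiv one_ne_zero).continuousOn
  refine ⟨max C 0, le_max_right _ _, fun x hx y hy => ?_⟩
  exact Convex.norm_image_sub_le_of_norm_fderiv_le
    (fun z _ => (hG.differentiable one_ne_zero).differentiableAt)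
    (fun z hz => (hC z hz).trans (le_max_left _ _)) hconv hx hy

lemma grad_bound (hV : ContDiff ℝ 2 V) (σ : EuclideanSpace ℝ (Fin k))
    (hσmin : fderiv ℝ V σ = 0) (r : ℝ) (hr : 0 ≤ r) :
    ∃ C : ℝ, 0 ≤ C ∧ ∀ x ∈ Metric.closedBall σ r, ‖fderiv ℝ V x‖ ≤ C * ‖x - σ‖ := by
  obtain ⟨M, hM0, hM⟩ := fderiv_lip hV _ (convex_closedBall σ r) (isCompact_closedBall σ r)
  refine ⟨M, hM0, fun x hx => ?_⟩
  have := hM σ (Metric.mem_closedBall_self hr) x hx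
  simpa [hσmin] using this

lemma taylor_upper (hV : ContDiff ℝ 2 V) {s : Set (EuclideanSpace ℝ (Fin k))}
    (hconv : Convex ℝ s) {M : ℝ}
    (hM : ∀ x ∈ s, ∀ y ∈ s, ‖fderiv ℝ V y - fderiv ℝ V x‖ ≤ M * ‖y - x‖)
    {x y : EuclideanSpace ℝ (Fin k)} (hx : x ∈ s) (hy : y ∈ s) :
    V y ≤ V x + ‖fderiv ℝ V x‖ * ‖y - x‖ + M / 2 * ‖y - x‖ ^ 2 := by
  have hd : ∀ t ∈ Set.uIcc (0:ℝ) 1, HasDerivAt (fun t : ℝ => V (x + t • (y - x)))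
      (fderiv ℝ V (x + t • (y - x)) (y - x)) t := fun t _ => line_hasDerivAt hV x (y - x) t
  have hG : ContDiff ℝ 1 (fderiv ℝ V) := hV.fderiv_right (by norm_num)
  have hcont : Continuous fun t : ℝ => fderiv ℝ V (x + t • (y - x)) (y - x) :=
    ((hG.continuous.comp
      (continuous_const.add (continuous_id.smul continuous_const))).clm_apply
      continuous_const)
  have hFTC := intervalIntegral.integral_eq_sub_of_hasDerivAt hd
    (hcont.intervalIntegrable 0 1)
  simp only [one_smul, zero_smul, add_zero, add_sub_cancel] at hFTC
  have hmem : ∀ t ∈ Set.Icc (0:ℝ) 1, x + t • (y - x) ∈ s := fun t ht =>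
    hconv.add_smul_sub_mem hx hy ht
  have hptwise : ∀ t ∈ Set.Icc (0:ℝ) 1,
      fderiv ℝ V (x + t • (y - x)) (y - x)
        ≤ ‖fderiv ℝ V x‖ * ‖y - x‖ + (M * t) * ‖y - x‖ ^ 2 := by
    intro t ht
    have hts : ‖t • (y - x)‖ = t * ‖y - x‖ := by
      rw [norm_smul, Real.norm_eq_abs, abs_of_nonneg ht.1]
    have h1 : ‖fderiv ℝ V (x + t • (y - x)) - fderiv ℝ V x‖ ≤ M * (t * ‖y - x‖) := by
      have := hM x hx _ (hmem t ht)
      rw [add_sub_cancel_left, hts] at this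
      exact this
    have h3 := norm_sub_norm_le (fderiv ℝ V (x + t • (y - x))) (fderiv ℝ V x)
    have h2 : ‖fderiv ℝ V (x + t • (y - x))‖ ≤ ‖fderiv ℝ V x‖ + M * (t * ‖y - x‖) := by
      linarith
    calc fderiv ℝ V (x + t • (y - x)) (y - x)
        ≤ ‖fderiv ℝ V (x + t • (y - x)) (y - x)‖ := by
          rw [Real.norm_eq_abs]; exact le_abs_self _
      _ ≤ ‖fderiv ℝ V (x + t • (y - x))‖ * ‖y - x‖ := ContinuousLinearMap.le_opNorm _ _
      _ ≤ (‖fderiv ℝ V x‖ + M * (t * ‖y - x‖)) * ‖y - x‖ :=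
          mul_le_mul_of_nonneg_right h2 (norm_nonneg _)
      _ = ‖fderiv ℝ V x‖ * ‖y - x‖ + (M * t) * ‖y - x‖ ^ 2 := by ring
  have hmul : Continuous fun t : ℝ => (M * t) * ‖y - x‖ ^ 2 := by fun_prop
  have hintR : IntervalIntegrable
      (fun t : ℝ => ‖fderiv ℝ V x‖ * ‖y - x‖ + (M * t) * ‖y - x‖ ^ 2) volume 0 1 :=
    (continuous_const.add hmul).intervalIntegrable 0 1
  have hmono := intervalIntegral.integral_mono_on zero_le_one
    (hcont.intervalIntegrable 0 1) hintR hptwise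
  have hval : (∫ t in (0:ℝ)..1, (‖fderiv ℝ V x‖ * ‖y - x‖ + (M * t) * ‖y - x‖ ^ 2))
      = ‖fderiv ℝ V x‖ * ‖y - x‖ + M / 2 * ‖y - x‖ ^ 2 := by
    rw [intervalIntegral.integral_add (intervalIntegrable_const) (hmul.intervalIntegrable 0 1)]
    rw [intervalIntegral.integral_const]
    have hre : (fun t : ℝ => (M * t) * ‖y - x‖ ^ 2) = fun t : ℝ => t * (M * ‖y - x‖ ^ 2) := by
      funext t; ring
    rw [hre, intervalIntegral.integral_mul_const, integral_id]
    simp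
    ring
  rw [hFTC] at hmono
  rw [hval] at hmono
  linarith

lemma tail_small_Ici {f : ℝ → ℝ} (hf : Integrable f volume) {ε : ℝ} (hε : 0 < ε) :
    ∃ T : ℝ, ∫ t in Set.Ici T, f t < ε := by
  have h1 : Tendsto (fun n : ℕ => ∫ t in Set.Ici (n : ℝ), f t) atTop
      (𝓝 (∫ t in ⋂ n : ℕ, Set.Ici (n : ℝ), f t)) := by
    apply Antitone.tendsto_setIntegral (fun i => measurableSet_Ici)
    · intro m n hmn
      exact Set.Ici_subset_Ici.2 (by exact_mod_cast hmn)
    · exact hf.integrableOn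
  have h2 : (⋂ n : ℕ, Set.Ici (n : ℝ)) = ∅ := by
    rw [Set.eq_empty_iff_forall_notMem]
    intro x hx
    obtain ⟨n, hn⟩ := exists_nat_gt x
    exact absurd (Set.mem_iInter.1 hx n) (not_le.2 hn)
  rw [h2] at h1
  simp only [Measure.restrict_empty, integral_zero_measure] at h1
  obtain ⟨N, hN⟩ := (h1.eventually (eventually_lt_nhds hε)).exists
  exact ⟨N, hN⟩

lemma tail_small_Iic {f : ℝ → ℝ} (hf : Integrable f volume) {ε : ℝ} (hε : 0 < ε) :
    ∃ T : ℝ, ∫ t in Set.Iic T, f t < ε := by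
  have h1 : Tendsto (fun n : ℕ => ∫ t in Set.Iic (-(n : ℝ)), f t) atTop
      (𝓝 (∫ t in ⋂ n : ℕ, Set.Iic (-(n : ℝ)), f t)) := by
    apply Antitone.tendsto_setIntegral (fun i => measurableSet_Iic)
    · intro m n hmn
      exact Set.Iic_subset_Iic.2 (by exact_mod_cast neg_le_neg (by exact_mod_cast hmn))
    · exact hf.integrableOn
  have h2 : (⋂ n : ℕ, Set.Iic (-(n : ℝ))) = ∅ := by
    rw [Set.eq_empty_iff_forall_notMem]
    intro x hx
    obtain ⟨n, hn⟩ := exists_nat_gt (-x)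
    have := Set.mem_iInter.1 hx n
    rw [Set.mem_Iic] at this
    linarith
  rw [h2] at h1
  simp only [Measure.restrict_empty, integral_zero_measure] at h1
  obtain ⟨N, hN⟩ := (h1.eventually (eventually_lt_nhds hε)).exists
  exact ⟨-N, hN⟩

lemma holder_interval {v : ℝ → EuclideanSpace ℝ (Fin k)} (hv2 : MemLp (deriv v) 2 volume)
    (hI : Integrable (fun t => ‖deriv v t‖ ^ 2) volume) {a b : ℝ} (hab : a ≤ b) :
    ∫ t in a..b, ‖deriv v t‖ ≤ Real.sqrt (∫ t, ‖deriv v t‖ ^ 2) * Real.sqrt (b - a) := by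
  set μ' := volume.restrict (Set.Ioc a b) with hμ'
  have hfin : IsFiniteMeasure μ' := by
    constructor
    rw [hμ', Measure.restrict_apply_univ, Real.volume_Ioc]
    exact ENNReal.ofReal_lt_top
  have hpq : Real.HolderConjugate 2 2 := Real.holderConjugate_iff.mpr ⟨one_lt_two, by norm_num⟩
  have hmemf : MemLp (fun t => ‖deriv v t‖) (ENNReal.ofReal 2) μ' := by
    rw [ENNReal.ofReal_ofNat]
    exact (hv2.restrict _).norm
  have hmemg : MemLp (fun _ : ℝ => (1 : ℝ)) (ENNReal.ofReal 2) μ' := by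
    rw [ENNReal.ofReal_ofNat]
    exact memLp_const 1
  have hH := integral_mul_le_Lp_mul_Lq_of_nonneg hpq
    (Filter.Eventually.of_forall fun t => norm_nonneg _)
    (Filter.Eventually.of_forall fun _ => zero_le_one) hmemf hmemg
  simp only [mul_one] at hH
  have hL : (∫ t in a..b, ‖deriv v t‖) = ∫ t, ‖deriv v t‖ ∂μ' := by
    rw [intervalIntegral.integral_of_le hab]
  rw [hL]
  refine hH.trans ?_
  have hone : (∫ t, (1 : ℝ) ^ (2:ℝ) ∂μ') = b - a := by
    simp only [Real.one_rpow]
    rw [MeasureTheory.integral_const, smul_eq_mul, mul_one, hμ', measureReal_restrict_apply_univ,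
      Real.volume_real_Ioc_of_le hab]
  have hsq : (∫ t, ‖deriv v t‖ ^ (2:ℝ) ∂μ') ≤ ∫ t, ‖deriv v t‖ ^ 2 := by
    have hre : (fun t => ‖deriv v t‖ ^ (2:ℝ)) = fun t => ‖deriv v t‖ ^ 2 := by
      funext t
      rw [← Real.rpow_natCast ‖deriv v t‖ 2]
      norm_num
    rw [hre]
    exact setIntegral_le_integral hI (Filter.Eventually.of_forall fun t => by positivity)
  rw [hone]
  rw [Real.sqrt_eq_rpow, Real.sqrt_eq_rpow]
  apply mul_le_mul_of_nonneg_right _ (Real.rpow_nonneg (by linarith) _)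
  exact Real.rpow_le_rpow (integral_nonneg fun t => Real.rpow_nonneg (norm_nonneg _) _)
    hsq (by norm_num)

lemma h1_dist_bound {v : ℝ → EuclideanSpace ℝ (Fin k)} (hv : MemH1 v)
    (hI : Integrable (fun t => ‖deriv v t‖ ^ 2) volume) {a b : ℝ} (hab : a ≤ b) :
    ‖v b - v a‖ ≤ Real.sqrt (∫ t, ‖deriv v t‖ ^ 2) * Real.sqrt (b - a) := by
  rw [hv.1.2 a b]
  exact (intervalIntegral.norm_integral_le_integral_norm hab).trans
    (holder_interval hv.2.2 hI hab)

lemma memH1_tendsto_atTop {v : ℝ → EuclideanSpace ℝ (Fin k)} (hv : MemH1 v) :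
    Tendsto v atTop (𝓝 0) := by
  have hIv : Integrable (fun t => ‖v t‖ ^ 2) volume :=
    (memLp_two_iff_integrable_sq_norm hv.2.1.aestronglyMeasurable).1 hv.2.1
  have hId : Integrable (fun t => ‖deriv v t‖ ^ 2) volume :=
    (memLp_two_iff_integrable_sq_norm hv.2.2.aestronglyMeasurable).1 hv.2.2
  obtain ⟨L, hLeq⟩ : ∃ L : ℝ, Real.sqrt (∫ t, ‖deriv v t‖ ^ 2) = L := ⟨_, rfl⟩
  have hL0 : 0 ≤ L := hLeq ▸ Real.sqrt_nonneg _
  rw [Metric.tendsto_atTop]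
  intro ε hε
  obtain ⟨δ, hδ0, hδval⟩ : ∃ δ : ℝ, 0 < δ ∧ Real.sqrt δ = ε / (2 * (L + 1)) :=
    ⟨(ε / (2 * (L + 1))) ^ 2, by positivity, Real.sqrt_sq (by positivity)⟩
  obtain ⟨T, hT⟩ := tail_small_Ici hIv (show (0:ℝ) < δ * (ε / 2) ^ 2 by positivity)
  refine ⟨T, fun t ht => ?_⟩
  rw [dist_zero_right]
  by_contra hcon
  push_neg at hcon
  have hlow : ∀ s ∈ Set.Icc t (t + δ), ε / 2 ≤ ‖v s‖ := by
    intro s hs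
    have hst : t ≤ s := hs.1
    have hb := h1_dist_bound hv hId hst
    rw [hLeq] at hb
    have h2 : Real.sqrt (s - t) ≤ Real.sqrt δ := Real.sqrt_le_sqrt (by linarith [hs.2])
    have h4 : L * Real.sqrt (s - t) ≤ (L + 1) * (ε / (2 * (L + 1))) := by
      calc L * Real.sqrt (s - t) ≤ L * Real.sqrt δ := mul_le_mul_of_nonneg_left h2 hL0
        _ ≤ (L + 1) * Real.sqrt δ := by nlinarith [Real.sqrt_nonneg δ]
        _ = (L + 1) * (ε / (2 * (L + 1))) := by rw [hδval]
    have h5 : (L + 1) * (ε / (2 * (L + 1))) = ε / 2 := by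
      have : L + 1 ≠ 0 := by linarith
      field_simp
    have h7 : ‖v s - v t‖ ≤ ε / 2 := by rw [← h5]; exact hb.trans h4
    have h8 := norm_sub_norm_le (v t) (v s)
    rw [norm_sub_rev] at h8
    linarith
  have hlow2 : δ * (ε / 2) ^ 2 ≤ ∫ s in Set.Icc t (t + δ), ‖v s‖ ^ 2 := by
    have h1 : (∫ _ in Set.Icc t (t + δ), ((ε / 2) ^ 2 : ℝ))
        ≤ ∫ s in Set.Icc t (t + δ), ‖v s‖ ^ 2 := by
      apply setIntegral_mono_on
      · exact (integrableOn_const_iff (C := ((ε / 2) ^ 2 : ℝ))).2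
          (Or.inr (by rw [Real.volume_Icc]; exact ENNReal.ofReal_lt_top))
      · exact hIv.integrableOn
      · exact measurableSet_Icc
      · intro s hs
        have := hlow s hs
        nlinarith [norm_nonneg (v s)]
    have h2 : (∫ _ in Set.Icc t (t + δ), ((ε / 2) ^ 2 : ℝ)) = δ * (ε / 2) ^ 2 := by
      rw [MeasureTheory.setIntegral_const, Real.volume_real_Icc_of_le (by linarith)]
      simp only [smul_eq_mul]
      ring_nf
    linarith
  have hsub : (∫ s in Set.Icc t (t + δ), ‖v s‖ ^ 2) ≤ ∫ s in Set.Ici T, ‖v s‖ ^ 2 := by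
    apply setIntegral_mono_set hIv.integrableOn
    · filter_upwards with s using by positivity
    · exact HasSubset.Subset.eventuallyLE (fun s hs => le_trans ht hs.1)
  linarith
lemma memH1_tendsto_atBot {v : ℝ → EuclideanSpace ℝ (Fin k)} (hv : MemH1 v) :
    Tendsto v atBot (𝓝 0) := by
  have hIv : Integrable (fun t => ‖v t‖ ^ 2) volume :=
    (memLp_two_iff_integrable_sq_norm hv.2.1.aestronglyMeasurable).1 hv.2.1
  have hId : Integrable (fun t => ‖deriv v t‖ ^ 2) volume :=
    (memLp_two_iff_integrable_sq_norm hv.2.2.aestronglyMeasurable).1 hv.2.2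
  obtain ⟨L, hLeq⟩ : ∃ L : ℝ, Real.sqrt (∫ t, ‖deriv v t‖ ^ 2) = L := ⟨_, rfl⟩
  have hL0 : 0 ≤ L := hLeq ▸ Real.sqrt_nonneg _
  rw [Metric.tendsto_nhds]
  intro ε hε
  rw [eventually_atBot]
  obtain ⟨δ, hδ0, hδval⟩ : ∃ δ : ℝ, 0 < δ ∧ Real.sqrt δ = ε / (2 * (L + 1)) :=
    ⟨(ε / (2 * (L + 1))) ^ 2, by positivity, Real.sqrt_sq (by positivity)⟩
  obtain ⟨T, hT⟩ := tail_small_Iic hIv (show (0:ℝ) < δ * (ε / 2) ^ 2 by positivity)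
  refine ⟨T, fun t ht => ?_⟩
  rw [dist_zero_right]
  by_contra hcon
  push_neg at hcon
  have hlow : ∀ s ∈ Set.Icc (t - δ) t, ε / 2 ≤ ‖v s‖ := by
    intro s hs
    have hst : s ≤ t := hs.2
    have hb := h1_dist_bound hv hId hst
    rw [hLeq] at hb
    have h2 : Real.sqrt (t - s) ≤ Real.sqrt δ := Real.sqrt_le_sqrt (by linarith [hs.1])
    have h4 : L * Real.sqrt (t - s) ≤ (L + 1) * (ε / (2 * (L + 1))) := by
      calc L * Real.sqrt (t - s) ≤ L * Real.sqrt δ := mul_le_mul_of_nonneg_left h2 hL0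
        _ ≤ (L + 1) * Real.sqrt δ := by nlinarith [Real.sqrt_nonneg δ]
        _ = (L + 1) * (ε / (2 * (L + 1))) := by rw [hδval]
    have h5 : (L + 1) * (ε / (2 * (L + 1))) = ε / 2 := by
      have : L + 1 ≠ 0 := by linarith
      field_simp
    have h7 : ‖v t - v s‖ ≤ ε / 2 := by rw [← h5]; exact hb.trans h4
    have h8 := norm_sub_norm_le (v t) (v s)
    linarith
  have hlow2 : δ * (ε / 2) ^ 2 ≤ ∫ s in Set.Icc (t - δ) t, ‖v s‖ ^ 2 := by
    have h1 : (∫ _ in Set.Icc (t - δ) t, ((ε / 2) ^ 2 : ℝ))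
        ≤ ∫ s in Set.Icc (t - δ) t, ‖v s‖ ^ 2 := by
      apply setIntegral_mono_on
      · exact (integrableOn_const_iff (C := ((ε / 2) ^ 2 : ℝ))).2
          (Or.inr (by rw [Real.volume_Icc]; exact ENNReal.ofReal_lt_top))
      · exact hIv.integrableOn
      · exact measurableSet_Icc
      · intro s hs
        have := hlow s hs
        nlinarith [norm_nonneg (v s)]
    have h2 : (∫ _ in Set.Icc (t - δ) t, ((ε / 2) ^ 2 : ℝ)) = δ * (ε / 2) ^ 2 := by
      rw [MeasureTheory.setIntegral_const, Real.volume_real_Icc_of_le (by linarith)]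
      simp only [smul_eq_mul]
      ring_nf
    linarith
  have hsub : (∫ s in Set.Icc (t - δ) t, ‖v s‖ ^ 2) ≤ ∫ s in Set.Iic T, ‖v s‖ ^ 2 := by
    apply setIntegral_mono_set hIv.integrableOn
    · filter_upwards with s using by positivity
    · exact HasSubset.Subset.eventuallyLE (fun s hs => le_trans hs.2 ht)
  linarith

lemma bounded_range_of_tendsto (f : ℝ → EuclideanSpace ℝ (Fin k)) (hf : Continuous f)
    {a b : EuclideanSpace ℝ (Fin k)} (hbot : Tendsto f atBot (𝓝 a))
    (htop : Tendsto f atTop (𝓝 b)) :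
    ∃ R : ℝ, 0 ≤ R ∧ ∀ t, ‖f t‖ ≤ R := by
  have h1 : ∀ᶠ t in atBot, dist (f t) a < 1 := hbot (Metric.ball_mem_nhds a one_pos)
  have h2 : ∀ᶠ t in atTop, dist (f t) b < 1 := htop (Metric.ball_mem_nhds b one_pos)
  obtain ⟨T1, hT1⟩ := eventually_atBot.1 h1
  obtain ⟨T2, hT2⟩ := eventually_atTop.1 h2
  obtain ⟨C, hC⟩ := (isCompact_Icc (a := T1) (b := T2)).exists_bound_of_continuousOn
    hf.continuousOn
  refine ⟨max (max C (‖a‖ + 1)) (‖b‖ + 1),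
    le_trans (by positivity) (le_max_right _ _), fun t => ?_⟩
  rcases le_total t T1 with h | h
  · have hd1 := hT1 t h
    have h3 := norm_sub_norm_le (f t) a
    rw [← dist_eq_norm] at h3
    have hd : ‖f t‖ ≤ ‖a‖ + 1 := by linarith
    exact hd.trans (le_trans (le_max_right _ _) (le_max_left _ _))
  · rcases le_total t T2 with h' | h'
    · exact (hC t ⟨h, h'⟩).trans (le_trans (le_max_left _ _) (le_max_left _ _))
    · have hd2 := hT2 t h'
      have h3 := norm_sub_norm_le (f t) b
      rw [← dist_eq_norm] at h3
      have hd : ‖f t‖ ≤ ‖b‖ + 1 := by linarith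
      exact hd.trans (le_max_right _ _)


set_option maxHeartbeats 1000000 in
theorem stmt_4 (V : EuclideanSpace ℝ (Fin k) → ℝ)
    (hV : ContDiff ℝ 2 V) (hVnn : ∀ u, 0 ≤ V u)
    (S : Set (EuclideanSpace ℝ (Fin k))) (hSfin : S.Finite)
    (hSzero : ∀ u, V u = 0 ↔ u ∈ S)
    (hhess : ∀ σ ∈ S, ∀ u : EuclideanSpace ℝ (Fin k), u ≠ 0 →
      0 < iteratedFDeriv ℝ 2 V σ ![u, u])
    (σi σj : EuclideanSpace ℝ (Fin k)) (hσi : σi ∈ S) (hσj : σj ∈ S) :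
    (∀ q qt : ℝ → EuclideanSpace ℝ (Fin k),
        InX V σi σj q → InX V σi σj qt → MemH1 (q - qt)) ∧
      (∀ q v : ℝ → EuclideanSpace ℝ (Fin k),
        InX V σi σj q → MemH1 v → InX V σi σj (q + v)) := by
  have hVc : Continuous V := hV.continuous
  have hVσi : V σi = 0 := (hSzero σi).2 hσi
  have hVσj : V σj = 0 := (hSzero σj).2 hσj
  obtain ⟨ri, hri, ci, hci, hquadi⟩ := quad_lower hV hVnn σi hVσi (hhess σi hσi)
  obtain ⟨rj, hrj, cj, hcj, hquadj⟩ := quad_lower hV hVnn σj hVσj (hhess σj hσj)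
  constructor
  · rintro q qt ⟨hqAC, hqE, hqbot, hqtop⟩ ⟨htAC, htE, htbot, httop⟩
    have hVq : Integrable (fun t => V (q t)) volume := integrable_V_comp hqAC hqE hVc hVnn
    have hVqt : Integrable (fun t => V (qt t)) volume := integrable_V_comp htAC htE hVc hVnn
    have hd1 : MemLp (deriv q) 2 volume := memLp_deriv hqAC hqE hVnn
    have hd2 : MemLp (deriv qt) 2 volume := memLp_deriv htAC htE hVnn
    have hACsub : AC (q - qt) := hqAC.sub htAC
    have hcont : Continuous (q - qt) := hqAC.continuous.sub htAC.continuous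
    have hcontsq : Continuous fun t => ‖(q - qt) t‖ ^ 2 := by fun_prop
    refine ⟨hACsub, ?_, ?_⟩
    · rw [memLp_two_iff_integrable_sq_norm hcont.aestronglyMeasurable]
      obtain ⟨T2, hT2⟩ := eventually_atTop.1
        ((hqtop.eventually_mem (Metric.closedBall_mem_nhds σj hrj)).and
          (httop.eventually_mem (Metric.closedBall_mem_nhds σj hrj)))
      obtain ⟨T1, hT1⟩ := eventually_atBot.1
        ((hqbot.eventually_mem (Metric.closedBall_mem_nhds σi hri)).and
          (htbot.eventually_mem (Metric.closedBall_mem_nhds σi hri)))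
      have key : ∀ (σ : EuclideanSpace ℝ (Fin k)) (c : ℝ), 0 < c →
          ∀ t : ℝ,
          c * ‖q t - σ‖ ^ 2 ≤ V (q t) → c * ‖qt t - σ‖ ^ 2 ≤ V (qt t) →
          ‖(q - qt) t‖ ^ 2 ≤ 2 / c * (V (q t) + V (qt t)) := by
        intro σ c hc t e1 e2
        have e3 : ‖q t - qt t‖ ≤ ‖q t - σ‖ + ‖qt t - σ‖ := by
          have h := norm_sub_le (q t - σ) (qt t - σ)
          simpa [sub_sub_sub_cancel_right] using h
        have e4 : ‖q t - qt t‖ ^ 2 ≤ 2 * ‖q t - σ‖ ^ 2 + 2 * ‖qt t - σ‖ ^ 2 := by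
          nlinarith [mul_self_le_mul_self (norm_nonneg (q t - qt t)) e3,
            sq_nonneg (‖q t - σ‖ - ‖qt t - σ‖)]
        have hgoal : c * ‖q t - qt t‖ ^ 2 ≤ 2 * (V (q t) + V (qt t)) := by
          nlinarith [mul_le_mul_of_nonneg_left e4 hc.le]
        have hre : ‖(q - qt) t‖ = ‖q t - qt t‖ := rfl
        rw [hre]
        calc ‖q t - qt t‖ ^ 2 = (c * ‖q t - qt t‖ ^ 2) / c := by field_simp
          _ ≤ (2 * (V (q t) + V (qt t))) / c := by gcongr
          _ = 2 / c * (V (q t) + V (qt t)) := by ring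
      have hItop : IntegrableOn (fun t => ‖(q - qt) t‖ ^ 2) (Set.Ici T2) volume := by
        refine Integrable.mono' (((hVq.add hVqt).const_mul (2 / cj)).integrableOn)
          hcontsq.aestronglyMeasurable.restrict ?_
        rw [ae_restrict_iff' measurableSet_Ici]
        filter_upwards with t htt
        obtain ⟨hm1, hm2⟩ := hT2 t htt
        rw [Real.norm_eq_abs, abs_of_nonneg (by positivity)]
        exact key σj cj hcj t (hquadj _ hm1) (hquadj _ hm2)
      have hIbot : IntegrableOn (fun t => ‖(q - qt) t‖ ^ 2) (Set.Iic T1) volume := by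
        refine Integrable.mono' (((hVq.add hVqt).const_mul (2 / ci)).integrableOn)
          hcontsq.aestronglyMeasurable.restrict ?_
        rw [ae_restrict_iff' measurableSet_Iic]
        filter_upwards with t htt
        obtain ⟨hm1, hm2⟩ := hT1 t htt
        rw [Real.norm_eq_abs, abs_of_nonneg (by positivity)]
        exact key σi ci hci t (hquadi _ hm1) (hquadi _ hm2)
      set a := min T1 T2 with ha
      have hIbot' : IntegrableOn (fun t => ‖(q - qt) t‖ ^ 2) (Set.Iic a) volume :=
        hIbot.mono_set (Set.Iic_subset_Iic.2 (min_le_left _ _))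
      have hImid : IntegrableOn (fun t => ‖(q - qt) t‖ ^ 2) (Set.Icc a T2) volume :=
        hcontsq.continuousOn.integrableOn_compact isCompact_Icc
      have hall := hIbot'.union (hImid.union hItop)
      have hset : Set.Iic a ∪ (Set.Icc a T2 ∪ Set.Ici T2) = Set.univ := by
        rw [Set.Icc_union_Ici_eq_Ici (min_le_right T1 T2)]
        exact Set.Iic_union_Ici
      rwa [hset, integrableOn_univ] at hall
    · exact MemLp.ae_eq (hqAC.deriv_sub_ae htAC).symm (hd1.sub hd2)
  · rintro q v ⟨hqAC, hqE, hqbot, hqtop⟩ hvH1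
    obtain ⟨hvAC, hvL2, hvdL2⟩ := hvH1
    have hvtop : Tendsto v atTop (𝓝 0) := memH1_tendsto_atTop ⟨hvAC, hvL2, hvdL2⟩
    have hvbot : Tendsto v atBot (𝓝 0) := memH1_tendsto_atBot ⟨hvAC, hvL2, hvdL2⟩
    have hqd : MemLp (deriv q) 2 volume := memLp_deriv hqAC hqE hVnn
    have hVq : Integrable (fun t => V (q t)) volume := integrable_V_comp hqAC hqE hVc hVnn
    have hACadd : AC (q + v) := hqAC.add hvAC
    have hIv2 : Integrable (fun t => ‖v t‖ ^ 2) volume :=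
      (memLp_two_iff_integrable_sq_norm hvL2.aestronglyMeasurable).1 hvL2
    have hqcont := hqAC.continuous
    have hvcont := hvAC.continuous
    obtain ⟨Rq, hRq0, hRq⟩ := bounded_range_of_tendsto q hqcont hqbot hqtop
    obtain ⟨Rv, hRv0, hRv⟩ := bounded_range_of_tendsto v hvcont hvbot hvtop
    obtain ⟨M, hM0, hMlip⟩ := fderiv_lip hV (Metric.closedBall 0 (Rq + Rv))
      (convex_closedBall _ _) (isCompact_closedBall _ _)
    have hfdσi : fderiv ℝ V σi = 0 := by
      have hmin : IsLocalMin V σi := Filter.Eventually.of_forall fun y => by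
        rw [hVσi]; exact hVnn y
      exact hmin.fderiv_eq_zero
    have hfdσj : fderiv ℝ V σj = 0 := by
      have hmin : IsLocalMin V σj := Filter.Eventually.of_forall fun y => by
        rw [hVσj]; exact hVnn y
      exact hmin.fderiv_eq_zero
    obtain ⟨Ci, hCi0, hCi⟩ := grad_bound hV σi hfdσi ri hri.le
    obtain ⟨Cj, hCj0, hCj⟩ := grad_bound hV σj hfdσj rj hrj.le
    have hqB : ∀ t, q t ∈ Metric.closedBall (0 : EuclideanSpace ℝ (Fin k)) (Rq + Rv) := by
      intro t
      rw [Metric.mem_closedBall, dist_zero_right]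
      linarith [hRq t]
    have hqvB : ∀ t, q t + v t ∈ Metric.closedBall (0 : EuclideanSpace ℝ (Fin k)) (Rq + Rv) := by
      intro t
      rw [Metric.mem_closedBall, dist_zero_right]
      exact (norm_add_le _ _).trans (add_le_add (hRq t) (hRv t))
    have hptw : ∀ t, V (q t + v t)
        ≤ V (q t) + ‖fderiv ℝ V (q t)‖ * ‖v t‖ + M / 2 * ‖v t‖ ^ 2 := by
      intro t
      have := taylor_upper hV (convex_closedBall _ _) hMlip (hqB t) (hqvB t)
      simpa [add_sub_cancel_left] using this
    -- tail bound helper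
    have key2 : ∀ (σ : EuclideanSpace ℝ (Fin k)) (c C : ℝ), 0 < c → 0 ≤ C →
        ∀ t : ℝ, ‖fderiv ℝ V (q t)‖ ≤ C * ‖q t - σ‖ →
        c * ‖q t - σ‖ ^ 2 ≤ V (q t) →
        V (q t + v t) ≤ (1 + C / (2 * c) + (C + M) / 2) * (V (q t) + ‖v t‖ ^ 2) := by
      intro σ c C hc hC t hG hquad
      have hP0 : 0 ≤ V (q t) := hVnn _
      have hb0 : (0:ℝ) ≤ ‖v t‖ ^ 2 := sq_nonneg _
      have hab : ‖q t - σ‖ * ‖v t‖ ≤ (‖q t - σ‖ ^ 2 + ‖v t‖ ^ 2) / 2 := by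
        nlinarith [sq_nonneg (‖q t - σ‖ - ‖v t‖)]
      have hq2 : ‖q t - σ‖ ^ 2 ≤ V (q t) / c := by
        rw [le_div_iff₀ hc]
        linarith [hquad]
      have step1 : ‖fderiv ℝ V (q t)‖ * ‖v t‖ ≤ C * (‖q t - σ‖ * ‖v t‖) := by
        calc ‖fderiv ℝ V (q t)‖ * ‖v t‖ ≤ (C * ‖q t - σ‖) * ‖v t‖ :=
              mul_le_mul_of_nonneg_right hG (norm_nonneg _)
          _ = C * (‖q t - σ‖ * ‖v t‖) := by ring
      have step2 : C * (‖q t - σ‖ * ‖v t‖) ≤ C * ((V (q t) / c + ‖v t‖ ^ 2) / 2) := by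
        apply mul_le_mul_of_nonneg_left _ hC
        calc ‖q t - σ‖ * ‖v t‖ ≤ (‖q t - σ‖ ^ 2 + ‖v t‖ ^ 2) / 2 := hab
          _ ≤ (V (q t) / c + ‖v t‖ ^ 2) / 2 := by linarith
      have heq : C * ((V (q t) / c + ‖v t‖ ^ 2) / 2)
          = C / (2 * c) * V (q t) + C / 2 * ‖v t‖ ^ 2 := by
        field_simp
      have hVdivc : (0:ℝ) ≤ C / (2 * c) := by positivity
      have hdone := hptw t
      nlinarith [mul_nonneg hVdivc hb0, mul_nonneg (by positivity : (0:ℝ) ≤ (C + M) / 2) hP0,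
        mul_nonneg hM0 hb0, mul_nonneg hVdivc hP0]
    obtain ⟨T2, hT2⟩ := eventually_atTop.1 (hqtop.eventually_mem (Metric.closedBall_mem_nhds σj hrj))
    obtain ⟨T1, hT1⟩ := eventually_atBot.1 (hqbot.eventually_mem (Metric.closedBall_mem_nhds σi hri))
    have hVqvcont : Continuous fun t => V (q t + v t) := hVc.comp (hqcont.add hvcont)
    have hItop : IntegrableOn (fun t => V (q t + v t)) (Set.Ici T2) volume := by
      refine Integrable.mono'
        (((hVq.add hIv2).const_mul (1 + Cj / (2 * cj) + (Cj + M) / 2)).integrableOn)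
        hVqvcont.aestronglyMeasurable.restrict ?_
      rw [ae_restrict_iff' measurableSet_Ici]
      filter_upwards with t htt
      rw [Real.norm_eq_abs, abs_of_nonneg (hVnn _)]
      exact key2 σj cj Cj hcj hCj0 t (hCj _ (hT2 t htt)) (hquadj _ (hT2 t htt))
    have hIbot : IntegrableOn (fun t => V (q t + v t)) (Set.Iic T1) volume := by
      refine Integrable.mono'
        (((hVq.add hIv2).const_mul (1 + Ci / (2 * ci) + (Ci + M) / 2)).integrableOn)
        hVqvcont.aestronglyMeasurable.restrict ?_
      rw [ae_restrict_iff' measurableSet_Iic]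
      filter_upwards with t htt
      rw [Real.norm_eq_abs, abs_of_nonneg (hVnn _)]
      exact key2 σi ci Ci hci hCi0 t (hCi _ (hT1 t htt)) (hquadi _ (hT1 t htt))
    set a := min T1 T2 with ha
    have hIbot' : IntegrableOn (fun t => V (q t + v t)) (Set.Iic a) volume :=
      hIbot.mono_set (Set.Iic_subset_Iic.2 (min_le_left _ _))
    have hImid : IntegrableOn (fun t => V (q t + v t)) (Set.Icc a T2) volume :=
      hVqvcont.continuousOn.integrableOn_compact isCompact_Icc
    have hall := hIbot'.union (hImid.union hItop)
    have hset : Set.Iic a ∪ (Set.Icc a T2 ∪ Set.Ici T2) = Set.univ := by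
      rw [Set.Icc_union_Ici_eq_Ici (min_le_right T1 T2)]
      exact Set.Iic_union_Ici
    rw [hset, integrableOn_univ] at hall
    have hdaddL2 : MemLp (deriv (q + v)) 2 volume :=
      MemLp.ae_eq (hqAC.deriv_add_ae hvAC).symm (hqd.add hvdL2)
    have hIderiv : Integrable (fun t => ‖deriv (q + v) t‖ ^ 2) volume :=
      (memLp_two_iff_integrable_sq_norm hdaddL2.aestronglyMeasurable).1 hdaddL2
    refine ⟨hACadd, ?_, ?_, ?_⟩
    · exact ((hIderiv.const_mul (1 / 2)).add hall)
    · have := hqbot.add hvbot; rw [add_zero] at this; exact this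
    · have := hqtop.add hvtop; rw [add_zero] at this; exact this
end
end

section
/- Let ψ : ℝ → ℝ^k be the piecewise-linear interpolation equal to σ⁻ for t ≤ -1, to σ⁺ for t ≥ 1, and affine in between, where σ⁻ ≠ σ⁺ are zeros of V. Then for every v ∈ H¹(ℝ, ℝ^k), the curve ψ + v has finite energy E(ψ + v) < ∞ and tends to σ⁻ at -∞ and σ⁺ at +∞, i.e. ψ + v ∈ X(σ⁻, σ⁺). -/
open MeasureTheory Filter intervalIntegral
open scoped RealInnerProductSpace Topology

noncomputable section

variable {k : ℕ}

/-- The piecewise affine interpolation between `σm` and `σp`. -/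
def psi (σm σp : EuclideanSpace ℝ (Fin k)) (t : ℝ) : EuclideanSpace ℝ (Fin k) :=
  if t ≤ -1 then σm
  else if t ≤ 1 then ((t + 1) / 2) • σp + ((1 - t) / 2) • σm
  else σp


section AuxLemmas

open Metric

lemma MeasureTheory.LocallyIntegrable.intervalIntegrable' {E : Type*} [NormedAddCommGroup E]
    {g : ℝ → E} (hg : MeasureTheory.LocallyIntegrable g volume) (a b : ℝ) :
    IntervalIntegrable g volume a b :=
  ⟨(hg.integrableOn_isCompact isCompact_Icc).mono_set Set.Ioc_subset_Icc_self,
   (hg.integrableOn_isCompact isCompact_Icc).mono_set Set.Ioc_subset_Icc_self⟩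

lemma locallyIntegrable_congr' {E : Type*} [NormedAddCommGroup E] {f g : ℝ → E}
    (hf : MeasureTheory.LocallyIntegrable f volume) (h : f =ᵐ[volume] g) :
    MeasureTheory.LocallyIntegrable g volume := by
  intro x
  obtain ⟨s, hs, hint⟩ := hf x
  exact ⟨s, hs, hint.congr (ae_restrict_of_ae h)⟩

lemma ae_hasDerivAt_of_integral {E : Type*} [NormedAddCommGroup E] [NormedSpace ℝ E]
    [CompleteSpace E] {f g : ℝ → E}
    (hg : MeasureTheory.LocallyIntegrable g volume)
    (hfg : ∀ a b : ℝ, f b - f a = ∫ t in a..b, g t) :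
    ∀ᵐ x, HasDerivAt f (g x) x := by
  filter_upwards [IsUnifLocDoublingMeasure.ae_tendsto_average_norm_sub volume hg 1] with x hx
  have key : Tendsto (fun y : ℝ => ⨍ t in closedBall x |y - x|, ‖g t - g x‖) (𝓝[≠] x) (𝓝 0) := by
    apply hx (fun _ => x) (fun y => |y - x|)
    · apply tendsto_nhdsWithin_of_tendsto_nhds_of_eventually_within
      · have : Tendsto (fun y : ℝ => y - x) (𝓝[≠] x) (𝓝 (x - x)) :=
          (tendsto_id.sub_const x).mono_left nhdsWithin_le_nhds
        simpa using this.abs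
      · filter_upwards [self_mem_nhdsWithin] with y hy
        simpa [sub_eq_zero] using hy
    · filter_upwards with y
      simp
  rw [hasDerivAt_iff_tendsto, ← nhdsNE_sup_pure x, tendsto_sup]
  constructor
  · have bound : ∀ᶠ y in 𝓝[≠] x,
        ‖y - x‖⁻¹ * ‖f y - f x - (y - x) • g x‖
          ≤ 2 * ⨍ t in closedBall x |y - x|, ‖g t - g x‖ := by
      filter_upwards [self_mem_nhdsWithin] with y hy
      have hyx : y ≠ x := hy
      set r : ℝ := |y - x| with hr
      have hrpos : 0 < r := abs_pos.2 (sub_ne_zero.2 hyx)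
      have hint : IntegrableOn (fun t => ‖g t - g x‖) (closedBall x r) volume :=
        ((hg.integrableOn_isCompact (isCompact_closedBall x r)).sub
          (integrableOn_const measure_closedBall_lt_top.ne)).norm
      have h1 : f y - f x - (y - x) • g x = ∫ t in x..y, (g t - g x) := by
        rw [intervalIntegral.integral_sub (hg.intervalIntegrable' x y)
          intervalIntegrable_const, intervalIntegral.integral_const, ← hfg x y]
      have h2 : ‖∫ t in x..y, (g t - g x)‖ ≤ ∫ t in Set.uIoc x y, ‖g t - g x‖ :=
        intervalIntegral.norm_integral_le_integral_norm_uIoc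
      have hsub : Set.uIoc x y ⊆ closedBall x r := by
        intro t ht
        simp only [mem_closedBall, Real.dist_eq, abs_le]
        rcases le_total x y with h | h
        · rw [Set.uIoc_of_le h] at ht
          have hrv : r = y - x := by rw [hr, abs_of_nonneg (by linarith)]
          exact ⟨by linarith [ht.1], by linarith [ht.2]⟩
        · rw [Set.uIoc_comm, Set.uIoc_of_le h] at ht
          have hrv : r = x - y := by rw [hr, abs_of_nonpos (by linarith)]; ring
          exact ⟨by linarith [ht.1], by linarith [ht.2]⟩
      have h3 : ∫ t in Set.uIoc x y, ‖g t - g x‖ ≤ ∫ t in closedBall x r, ‖g t - g x‖ := by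
        apply setIntegral_mono_set hint
        · filter_upwards with t using norm_nonneg _
        · exact HasSubset.Subset.eventuallyLE hsub
      have hvol : (volume (closedBall x r)).toReal = 2 * r := by
        rw [Real.volume_closedBall, ENNReal.toReal_ofReal (by positivity)]
      calc ‖y - x‖⁻¹ * ‖f y - f x - (y - x) • g x‖
          = r⁻¹ * ‖∫ t in x..y, (g t - g x)‖ := by rw [h1, Real.norm_eq_abs, ← hr]
        _ ≤ r⁻¹ * ∫ t in closedBall x r, ‖g t - g x‖ :=
            mul_le_mul_of_nonneg_left (h2.trans h3) (inv_nonneg.2 hrpos.le)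
        _ = 2 * ⨍ t in closedBall x r, ‖g t - g x‖ := by
            rw [setAverage_eq, smul_eq_mul, measureReal_def, hvol, ← mul_assoc]
            congr 1
            field_simp
    have nonneg : ∀ᶠ y in 𝓝[≠] x,
        0 ≤ ‖y - x‖⁻¹ * ‖f y - f x - (y - x) • g x‖ := by
      filter_upwards with y using by positivity
    have key2 : Tendsto (fun y : ℝ => 2 * ⨍ t in closedBall x |y - x|, ‖g t - g x‖)
        (𝓝[≠] x) (𝓝 0) := by
      simpa using key.const_mul 2
    exact squeeze_zero' nonneg bound key2
  · rw [tendsto_pure_left]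
    intro s hs
    have h0 : ‖x - x‖⁻¹ * ‖f x - f x - (x - x) • g x‖ = 0 := by simp
    simpa [h0] using mem_of_mem_nhds hs

lemma tendsto_tail_Ioi {h : ℝ → ℝ} (hh : Integrable h volume) :
    Tendsto (fun T : ℝ => ∫ s in Set.Ioi T, h s) atTop (𝓝 0) := by
  have : ∀ T : ℝ, ∫ s in Set.Ioi T, h s = ∫ s, (Set.Ioi T).indicator h s := fun T =>
    (MeasureTheory.integral_indicator measurableSet_Ioi).symm
  simp_rw [this]
  have h0 : (0 : ℝ) = ∫ _ : ℝ, (0 : ℝ) := by simp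
  rw [h0]
  apply MeasureTheory.tendsto_integral_filter_of_dominated_convergence (fun s => ‖h s‖)
  · filter_upwards with T using hh.1.indicator measurableSet_Ioi
  · filter_upwards with T
    filter_upwards with s using norm_indicator_le_norm_self h s
  · exact hh.norm
  · filter_upwards with s
    apply tendsto_nhds_of_eventually_eq
    filter_upwards [eventually_ge_atTop s] with T hT
    simp [Set.indicator_of_notMem, hT, not_lt.2 hT]

lemma tendsto_tail_Iic {h : ℝ → ℝ} (hh : Integrable h volume) :
    Tendsto (fun T : ℝ => ∫ s in Set.Iic T, h s) atBot (𝓝 0) := by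
  have : ∀ T : ℝ, ∫ s in Set.Iic T, h s = ∫ s, (Set.Iic T).indicator h s := fun T =>
    (MeasureTheory.integral_indicator measurableSet_Iic).symm
  simp_rw [this]
  have h0 : (0 : ℝ) = ∫ _ : ℝ, (0 : ℝ) := by simp
  rw [h0]
  apply MeasureTheory.tendsto_integral_filter_of_dominated_convergence (fun s => ‖h s‖)
  · filter_upwards with T using hh.1.indicator measurableSet_Iic
  · filter_upwards with T
    filter_upwards with s using norm_indicator_le_norm_self h s
  · exact hh.norm
  · filter_upwards with s
    apply tendsto_nhds_of_eventually_eq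
    filter_upwards [eventually_lt_atBot s] with T hT
    simp [Set.indicator_of_notMem, not_le.2 hT]

section DecayLemmas
variable {E : Type*} [NormedAddCommGroup E] [NormedSpace ℝ E]

lemma key_est {v g : ℝ → E} (hvc : Continuous v)
    (hloc : MeasureTheory.LocallyIntegrable g volume)
    (hfg : ∀ a b : ℝ, v b - v a = ∫ t in a..b, g t)
    (hv2 : Integrable (fun t => ‖v t‖ ^ 2) volume)
    (hg2 : Integrable (fun t => ‖g t‖ ^ 2) volume)
    {ε : ℝ} (hε : 0 < ε) (t : ℝ) :
    ‖v t‖ ≤ ε + (2 * ε)⁻¹ *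
      ((∫ s in Set.Ioi t, ‖v s‖ ^ 2) + ∫ s in Set.Ioi t, ‖g s‖ ^ 2) := by
  set I : Set ℝ := Set.Ioc t (t + 1) with hI
  have hvolI : volume I = 1 := by simp [hI]
  have hgI : IntegrableOn (fun s => ‖g s‖) I volume :=
    ((hloc.integrableOn_isCompact isCompact_Icc).mono_set Set.Ioc_subset_Icc_self).norm
  have hvI : IntegrableOn (fun s => ‖v s‖) I volume :=
    (hvc.norm.integrableOn_Icc).mono_set Set.Ioc_subset_Icc_self
  set G : ℝ := ∫ s in I, ‖g s‖ with hG
  have step0 : ∀ s ∈ I, ‖v t‖ ≤ ‖v s‖ + G := by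
    intro s hs
    have h1 : ‖v t‖ ≤ ‖v s‖ + ‖v s - v t‖ := by
      linarith [abs_le.1 (abs_norm_sub_norm_le (v s) (v t))]
    have h2 : ‖v s - v t‖ ≤ G := by
      rw [hfg t s]
      refine (intervalIntegral.norm_integral_le_integral_norm_uIoc).trans ?_
      rw [Set.uIoc_of_le hs.1.le]
      apply setIntegral_mono_set hgI
      · filter_upwards with u using norm_nonneg _
      · exact HasSubset.Subset.eventuallyLE (Set.Ioc_subset_Ioc_right hs.2)
    linarith
  have step1 : ‖v t‖ ≤ (∫ s in I, ‖v s‖) + G := by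
    have e1 : ‖v t‖ = ∫ _ in I, ‖v t‖ := by
      rw [setIntegral_const, measureReal_def, hvolI]; simp
    rw [e1]
    have e2 : (∫ s in I, ‖v s‖) + G = ∫ s in I, (‖v s‖ + G) := by
      rw [integral_add hvI (integrableOn_const (by rw [hvolI]; norm_num))]
      congr 1
      rw [setIntegral_const, measureReal_def, hvolI]; simp
    rw [e2]
    apply setIntegral_mono_on (integrableOn_const (by rw [hvolI]; norm_num))
      (hvI.add (integrableOn_const (by rw [hvolI]; norm_num)))
      measurableSet_Ioc step0
  have step2 : ∀ (f : ℝ → E), Continuous f ∨ MeasureTheory.LocallyIntegrable f volume →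
      Integrable (fun s => ‖f s‖ ^ 2) volume →
      (∫ s in I, ‖f s‖) ≤ ε / 2 + (2 * ε)⁻¹ * ∫ s in Set.Ioi t, ‖f s‖ ^ 2 := by
    intro f hf hf2
    have hfI : IntegrableOn (fun s => ‖f s‖) I volume := by
      rcases hf with hf | hf
      · exact (hf.norm.integrableOn_Icc).mono_set Set.Ioc_subset_Icc_self
      · exact ((hf.integrableOn_isCompact isCompact_Icc).mono_set Set.Ioc_subset_Icc_self).norm
    have p1 : (∫ s in I, ‖f s‖) ≤ ∫ s in I, (ε / 2 + (2 * ε)⁻¹ * ‖f s‖ ^ 2) := by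
      apply setIntegral_mono_on hfI
        ((integrableOn_const (by rw [hvolI]; norm_num)).add
          ((hf2.integrableOn).const_mul _))
        measurableSet_Ioc
      intro s _
      show ‖f s‖ ≤ ε / 2 + (2 * ε)⁻¹ * ‖f s‖ ^ 2
      have hεi : (0:ℝ) < 2 * ε := by linarith
      have hinv : (2 * ε)⁻¹ * (2 * ε) = 1 := inv_mul_cancel₀ hεi.ne'
      have hexp : 0 ≤ (2 * ε)⁻¹ * ((‖f s‖ - ε) ^ 2) :=
        mul_nonneg (inv_nonneg.2 hεi.le) (sq_nonneg _)
      nlinarith [hexp, hinv, norm_nonneg (f s)]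
    have p2 : (∫ s in I, (ε / 2 + (2 * ε)⁻¹ * ‖f s‖ ^ 2))
        = ε / 2 + (2 * ε)⁻¹ * ∫ s in I, ‖f s‖ ^ 2 := by
      rw [integral_add (integrableOn_const (μ := volume) (s := I) (C := ε / 2) (by rw [hvolI]; norm_num))
        ((hf2.integrableOn).const_mul _), setIntegral_const, measureReal_def, hvolI, MeasureTheory.integral_const_mul]
      simp
    have p3 : (∫ s in I, ‖f s‖ ^ 2) ≤ ∫ s in Set.Ioi t, ‖f s‖ ^ 2 := by
      apply setIntegral_mono_set hf2.integrableOn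
      · filter_upwards with u using sq_nonneg _
      · exact HasSubset.Subset.eventuallyLE Set.Ioc_subset_Ioi_self
    calc (∫ s in I, ‖f s‖) ≤ ε / 2 + (2 * ε)⁻¹ * ∫ s in I, ‖f s‖ ^ 2 := by rw [← p2]; exact p1
      _ ≤ ε / 2 + (2 * ε)⁻¹ * ∫ s in Set.Ioi t, ‖f s‖ ^ 2 := by
          have : (0:ℝ) ≤ (2 * ε)⁻¹ := by positivity
          nlinarith
  have hv' := step2 v (Or.inl hvc) hv2
  have hg' := step2 g (Or.inr hloc) hg2
  calc ‖v t‖ ≤ (∫ s in I, ‖v s‖) + G := step1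
    _ ≤ (ε / 2 + (2 * ε)⁻¹ * ∫ s in Set.Ioi t, ‖v s‖ ^ 2)
        + (ε / 2 + (2 * ε)⁻¹ * ∫ s in Set.Ioi t, ‖g s‖ ^ 2) := add_le_add hv' hg'
    _ = ε + (2 * ε)⁻¹ *
        ((∫ s in Set.Ioi t, ‖v s‖ ^ 2) + ∫ s in Set.Ioi t, ‖g s‖ ^ 2) := by ring

lemma key_est_bot {v g : ℝ → E} (hvc : Continuous v)
    (hloc : MeasureTheory.LocallyIntegrable g volume)
    (hfg : ∀ a b : ℝ, v b - v a = ∫ t in a..b, g t)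
    (hv2 : Integrable (fun t => ‖v t‖ ^ 2) volume)
    (hg2 : Integrable (fun t => ‖g t‖ ^ 2) volume)
    {ε : ℝ} (hε : 0 < ε) (t : ℝ) :
    ‖v t‖ ≤ ε + (2 * ε)⁻¹ *
      ((∫ s in Set.Iic t, ‖v s‖ ^ 2) + ∫ s in Set.Iic t, ‖g s‖ ^ 2) := by
  set I : Set ℝ := Set.Ioc (t - 1) t with hI
  have hvolI : volume I = 1 := by simp [hI]
  have hgI : IntegrableOn (fun s => ‖g s‖) I volume :=
    ((hloc.integrableOn_isCompact isCompact_Icc).mono_set Set.Ioc_subset_Icc_self).norm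
  have hvI : IntegrableOn (fun s => ‖v s‖) I volume :=
    (hvc.norm.integrableOn_Icc).mono_set Set.Ioc_subset_Icc_self
  set G : ℝ := ∫ s in I, ‖g s‖ with hG
  have step0 : ∀ s ∈ I, ‖v t‖ ≤ ‖v s‖ + G := by
    intro s hs
    have h1 : ‖v t‖ ≤ ‖v s‖ + ‖v t - v s‖ := by
      linarith [abs_le.1 (abs_norm_sub_norm_le (v t) (v s))]
    have h2 : ‖v t - v s‖ ≤ G := by
      rw [hfg s t]
      refine (intervalIntegral.norm_integral_le_integral_norm_uIoc).trans ?_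
      rw [Set.uIoc_of_le hs.2]
      apply setIntegral_mono_set hgI
      · filter_upwards with u using norm_nonneg _
      · exact HasSubset.Subset.eventuallyLE (Set.Ioc_subset_Ioc_left hs.1.le)
    linarith
  have step1 : ‖v t‖ ≤ (∫ s in I, ‖v s‖) + G := by
    have e1 : ‖v t‖ = ∫ _ in I, ‖v t‖ := by
      rw [setIntegral_const, measureReal_def, hvolI]; simp
    rw [e1]
    have e2 : (∫ s in I, ‖v s‖) + G = ∫ s in I, (‖v s‖ + G) := by
      rw [integral_add hvI (integrableOn_const (by rw [hvolI]; norm_num))]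
      congr 1
      rw [setIntegral_const, measureReal_def, hvolI]; simp
    rw [e2]
    apply setIntegral_mono_on (integrableOn_const (by rw [hvolI]; norm_num))
      (hvI.add (integrableOn_const (by rw [hvolI]; norm_num)))
      measurableSet_Ioc step0
  have step2 : ∀ (f : ℝ → E), Continuous f ∨ MeasureTheory.LocallyIntegrable f volume →
      Integrable (fun s => ‖f s‖ ^ 2) volume →
      (∫ s in I, ‖f s‖) ≤ ε / 2 + (2 * ε)⁻¹ * ∫ s in Set.Iic t, ‖f s‖ ^ 2 := by
    intro f hf hf2
    have hfI : IntegrableOn (fun s => ‖f s‖) I volume := by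
      rcases hf with hf | hf
      · exact (hf.norm.integrableOn_Icc).mono_set Set.Ioc_subset_Icc_self
      · exact ((hf.integrableOn_isCompact isCompact_Icc).mono_set Set.Ioc_subset_Icc_self).norm
    have p1 : (∫ s in I, ‖f s‖) ≤ ∫ s in I, (ε / 2 + (2 * ε)⁻¹ * ‖f s‖ ^ 2) := by
      apply setIntegral_mono_on hfI
        ((integrableOn_const (by rw [hvolI]; norm_num)).add
          ((hf2.integrableOn).const_mul _))
        measurableSet_Ioc
      intro s _
      show ‖f s‖ ≤ ε / 2 + (2 * ε)⁻¹ * ‖f s‖ ^ 2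
      have hεi : (0:ℝ) < 2 * ε := by linarith
      have hinv : (2 * ε)⁻¹ * (2 * ε) = 1 := inv_mul_cancel₀ hεi.ne'
      have hexp : 0 ≤ (2 * ε)⁻¹ * ((‖f s‖ - ε) ^ 2) :=
        mul_nonneg (inv_nonneg.2 hεi.le) (sq_nonneg _)
      nlinarith [hexp, hinv, norm_nonneg (f s)]
    have p2 : (∫ s in I, (ε / 2 + (2 * ε)⁻¹ * ‖f s‖ ^ 2))
        = ε / 2 + (2 * ε)⁻¹ * ∫ s in I, ‖f s‖ ^ 2 := by
      rw [integral_add (integrableOn_const (μ := volume) (s := I) (C := ε / 2) (by rw [hvolI]; norm_num))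
        ((hf2.integrableOn).const_mul _), setIntegral_const, measureReal_def, hvolI, MeasureTheory.integral_const_mul]
      simp
    have p3 : (∫ s in I, ‖f s‖ ^ 2) ≤ ∫ s in Set.Iic t, ‖f s‖ ^ 2 := by
      apply setIntegral_mono_set hf2.integrableOn
      · filter_upwards with u using sq_nonneg _
      · exact HasSubset.Subset.eventuallyLE
          (Set.Ioc_subset_Icc_self.trans Set.Icc_subset_Iic_self)
    calc (∫ s in I, ‖f s‖) ≤ ε / 2 + (2 * ε)⁻¹ * ∫ s in I, ‖f s‖ ^ 2 := by rw [← p2]; exact p1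
      _ ≤ ε / 2 + (2 * ε)⁻¹ * ∫ s in Set.Iic t, ‖f s‖ ^ 2 := by
          have : (0:ℝ) ≤ (2 * ε)⁻¹ := by positivity
          nlinarith
  have hv' := step2 v (Or.inl hvc) hv2
  have hg' := step2 g (Or.inr hloc) hg2
  calc ‖v t‖ ≤ (∫ s in I, ‖v s‖) + G := step1
    _ ≤ (ε / 2 + (2 * ε)⁻¹ * ∫ s in Set.Iic t, ‖v s‖ ^ 2)
        + (ε / 2 + (2 * ε)⁻¹ * ∫ s in Set.Iic t, ‖g s‖ ^ 2) := add_le_add hv' hg'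
    _ = ε + (2 * ε)⁻¹ *
        ((∫ s in Set.Iic t, ‖v s‖ ^ 2) + ∫ s in Set.Iic t, ‖g s‖ ^ 2) := by ring

lemma tendsto_zero_of_H1 {v g : ℝ → E} (hvc : Continuous v)
    (hloc : MeasureTheory.LocallyIntegrable g volume)
    (hfg : ∀ a b : ℝ, v b - v a = ∫ t in a..b, g t)
    (hv2 : Integrable (fun t => ‖v t‖ ^ 2) volume)
    (hg2 : Integrable (fun t => ‖g t‖ ^ 2) volume) :
    Tendsto v atTop (𝓝 0) ∧ Tendsto v atBot (𝓝 0) := by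
  constructor
  · rw [NormedAddCommGroup.tendsto_nhds_zero]
    intro ε hε
    have hε3 : 0 < ε / 3 := by linarith
    have htails : Tendsto
        (fun T : ℝ => (∫ s in Set.Ioi T, ‖v s‖ ^ 2) + ∫ s in Set.Ioi T, ‖g s‖ ^ 2)
        atTop (𝓝 0) := by
      simpa using (tendsto_tail_Ioi hv2).add (tendsto_tail_Ioi hg2)
    have hev := htails.eventually (gt_mem_nhds (show (0:ℝ) < 2 * (ε/3)^2 by positivity))
    filter_upwards [hev] with t ht
    have hb := key_est hvc hloc hfg hv2 hg2 hε3 t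
    have hc : (0:ℝ) ≤ (2 * (ε/3))⁻¹ := by positivity
    have hcδ : (2 * (ε/3))⁻¹ * (2 * (ε/3)^2) = ε/3 := by field_simp
    calc ‖v t‖ ≤ ε/3 + (2 * (ε/3))⁻¹ *
          ((∫ s in Set.Ioi t, ‖v s‖ ^ 2) + ∫ s in Set.Ioi t, ‖g s‖ ^ 2) := hb
      _ ≤ ε/3 + (2 * (ε/3))⁻¹ * (2 * (ε/3)^2) := by nlinarith
      _ < ε := by rw [hcδ]; linarith
  · rw [NormedAddCommGroup.tendsto_nhds_zero]
    intro ε hε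
    have hε3 : 0 < ε / 3 := by linarith
    have htails : Tendsto
        (fun T : ℝ => (∫ s in Set.Iic T, ‖v s‖ ^ 2) + ∫ s in Set.Iic T, ‖g s‖ ^ 2)
        atBot (𝓝 0) := by
      simpa using (tendsto_tail_Iic hv2).add (tendsto_tail_Iic hg2)
    have hev := htails.eventually (gt_mem_nhds (show (0:ℝ) < 2 * (ε/3)^2 by positivity))
    filter_upwards [hev] with t ht
    have hb := key_est_bot hvc hloc hfg hv2 hg2 hε3 t
    have hc : (0:ℝ) ≤ (2 * (ε/3))⁻¹ := by positivity
    have hcδ : (2 * (ε/3))⁻¹ * (2 * (ε/3)^2) = ε/3 := by field_simp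
    calc ‖v t‖ ≤ ε/3 + (2 * (ε/3))⁻¹ *
          ((∫ s in Set.Iic t, ‖v s‖ ^ 2) + ∫ s in Set.Iic t, ‖g s‖ ^ 2) := hb
      _ ≤ ε/3 + (2 * (ε/3))⁻¹ * (2 * (ε/3)^2) := by nlinarith
      _ < ε := by rw [hcδ]; linarith

end DecayLemmas

lemma quad_bound {k : ℕ} {V : EuclideanSpace ℝ (Fin k) → ℝ}
    (hV : ContDiff ℝ 2 V) (hVnn : ∀ u, 0 ≤ V u)
    (σ : EuclideanSpace ℝ (Fin k)) (hσ : V σ = 0) :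
    ∃ M : ℝ, 0 ≤ M ∧ ∀ h : EuclideanSpace ℝ (Fin k), ‖h‖ ≤ 1 → V (σ + h) ≤ M * ‖h‖ ^ 2 := by
  have hmin : IsLocalMin V σ := Filter.Eventually.of_forall (fun u => hσ ▸ hVnn u)
  have hd0 : fderiv ℝ V σ = 0 := hmin.fderiv_eq_zero
  have hD : ContDiff ℝ 1 (fderiv ℝ V) := (hV.fderiv_right (by norm_num))
  have hDc : Continuous (fderiv ℝ (fderiv ℝ V)) := (hD.continuous_fderiv (by norm_num))
  obtain ⟨M, hM⟩ := (isCompact_closedBall σ 1).exists_bound_of_continuousOn (hD.continuous_fderiv (by norm_num)).continuousOn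
  have hMnn : 0 ≤ M := le_trans (norm_nonneg _) (hM σ (mem_closedBall_self zero_le_one))
  have hVdiff : ∀ x, DifferentiableAt ℝ V x :=
    fun x => (hV.differentiable (by norm_num)).differentiableAt
  have hDdiff : ∀ x, DifferentiableAt ℝ (fderiv ℝ V) x :=
    fun x => (hD.differentiable (by norm_num)).differentiableAt
  have hLip : ∀ u ∈ closedBall σ 1, ‖fderiv ℝ V u‖ ≤ M * ‖u - σ‖ := by
    intro u hu
    have := (convex_closedBall σ 1).norm_image_sub_le_of_norm_fderiv_le
      (fun x _ => hDdiff x) hM (mem_closedBall_self zero_le_one) hu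
    rwa [hd0, sub_zero] at this
  refine ⟨M, hMnn, fun h hh => ?_⟩
  have hball : σ + h ∈ closedBall σ ‖h‖ := by
    simp [mem_closedBall, dist_eq_norm]
  have hsub : closedBall σ ‖h‖ ⊆ closedBall σ 1 := closedBall_subset_closedBall hh
  have hbd : ∀ x ∈ closedBall σ ‖h‖, ‖fderiv ℝ V x‖ ≤ M * ‖h‖ := by
    intro x hx
    refine (hLip x (hsub hx)).trans ?_
    have : ‖x - σ‖ ≤ ‖h‖ := by rwa [← dist_eq_norm, ← mem_closedBall]
    exact mul_le_mul_of_nonneg_left this hMnn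
  have key := (convex_closedBall σ ‖h‖).norm_image_sub_le_of_norm_fderiv_le
    (fun x _ => hVdiff x) hbd (mem_closedBall_self (norm_nonneg h)) hball
  have hkey2 : ‖V (σ + h) - V σ‖ ≤ M * ‖h‖ * ‖h‖ := by
    refine key.trans ?_
    have : ‖σ + h - σ‖ = ‖h‖ := by rw [add_sub_cancel_left]
    rw [this]
  have h2 : V (σ + h) ≤ ‖V (σ + h) - V σ‖ := by
    rw [hσ, sub_zero, Real.norm_eq_abs]
    exact le_abs_self _
  calc V (σ + h) ≤ M * ‖h‖ * ‖h‖ := h2.trans hkey2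
    _ = M * ‖h‖ ^ 2 := by ring

lemma sq_int {E : Type*} [NormedAddCommGroup E] {f : ℝ → E} (hf : MemLp f 2 volume) :
    Integrable (fun t => ‖f t‖ ^ 2) volume := by
  have h := hf.integrable_norm_rpow (by norm_num) (by norm_num)
  have heq : ∀ t : ℝ, ‖f t‖ ^ ((2:ENNReal).toReal) = ‖f t‖ ^ 2 := by
    intro t
    rw [ENNReal.toReal_ofNat]
    exact Real.rpow_natCast _ 2
  simpa [heq] using h

namespace PsiAux

variable {k : ℕ} (σm σp : EuclideanSpace ℝ (Fin k))

def A (t : ℝ) : EuclideanSpace ℝ (Fin k) := ((t + 1) / 2) • σp + ((1 - t) / 2) • σm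

def c : EuclideanSpace ℝ (Fin k) := (2:ℝ)⁻¹ • (σp - σm)

def psid (t : ℝ) : EuclideanSpace ℝ (Fin k) :=
  (Set.Ico (-1:ℝ) 1).indicator (fun _ => c σm σp) t

lemma hasDerivAt_A (t : ℝ) : HasDerivAt (A σm σp) (c σm σp) t := by
  have h1 : HasDerivAt (fun t : ℝ => ((t + 1) / 2) • σp) (((1:ℝ)/2) • σp) t :=
    ((((hasDerivAt_id t).add_const 1).div_const 2)).smul_const σp
  have h2 : HasDerivAt (fun t : ℝ => ((1 - t) / 2) • σm) (((-1:ℝ)/2) • σm) t := by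
    have : HasDerivAt (fun t : ℝ => (1 - t) / 2) ((-1:ℝ)/2) t := by
      simpa using (((hasDerivAt_id t).const_sub 1).div_const 2)
    exact this.smul_const σm
  have := h1.add h2
  refine this.congr_deriv ?_
  unfold c
  module

lemma A_neg_one : A σm σp (-1) = σm := by unfold A; norm_num
lemma A_one : A σm σp 1 = σp := by unfold A; norm_num

lemma psi_eq_left {t : ℝ} (h : t ≤ -1) : psi σm σp t = σm := if_pos h

lemma psi_eq_mid {t : ℝ} (h1 : -1 < t) (h2 : t ≤ 1) : psi σm σp t = A σm σp t := by
  unfold psi A; rw [if_neg (not_le.2 h1), if_pos h2]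

lemma psi_eq_right {t : ℝ} (h : 1 ≤ t) : psi σm σp t = σp := by
  rcases eq_or_lt_of_le h with h' | h'
  · rw [← h', psi_eq_mid σm σp (by norm_num) le_rfl, A_one]
  · unfold psi; rw [if_neg (by linarith), if_neg (by linarith)]

lemma psi_eq_clamp : psi σm σp = fun t => A σm σp (max (-1) (min 1 t)) := by
  funext t
  rcases le_or_gt t (-1) with h | h
  · rw [psi_eq_left σm σp h, min_eq_right (by linarith), max_eq_left (by linarith), A_neg_one]
  · rcases le_or_gt t 1 with h2 | h2
    · rw [psi_eq_mid σm σp h h2, min_eq_right h2, max_eq_right (by linarith)]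
    · rw [psi_eq_right σm σp h2.le, min_eq_left h2.le, max_eq_right (by norm_num), A_one]

lemma continuous_A : Continuous (A σm σp) := by
  unfold A
  exact (((continuous_id.add continuous_const).div_const 2).smul continuous_const).add
    (((continuous_const.sub continuous_id).div_const 2).smul continuous_const)

lemma continuous_psi : Continuous (psi σm σp) := by
  rw [psi_eq_clamp]
  exact (continuous_A σm σp).comp (continuous_const.max (continuous_const.min continuous_id))

lemma psid_integrable : Integrable (psid σm σp) volume := by
  unfold psid
  rw [integrable_indicator_iff measurableSet_Ico]
  exact integrableOn_const (by simp [Real.volume_Ico])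

lemma psid_memℒp : MemLp (psid σm σp) 2 volume := by
  unfold psid
  exact memLp_indicator_const 2 measurableSet_Ico _ (Or.inr (by simp [Real.volume_Ico]))

lemma hasDerivAt_psi {t : ℝ} (h1 : t ≠ -1) (h2 : t ≠ 1) :
    HasDerivAt (psi σm σp) (psid σm σp t) t := by
  rcases lt_trichotomy t (-1) with h | h | h
  · have hind : psid σm σp t = 0 :=
      Set.indicator_of_notMem (fun hc => absurd hc.1 (not_le.2 h)) _
    rw [hind]
    apply (hasDerivAt_const t σm).congr_of_eventuallyEq
    filter_upwards [Iio_mem_nhds h] with y hy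
    exact psi_eq_left σm σp (le_of_lt hy)
  · exact absurd h h1
  · rcases lt_trichotomy t 1 with h' | h' | h'
    · have hind : psid σm σp t = c σm σp :=
        Set.indicator_of_mem (Set.mem_Ico.mpr ⟨h.le, h'⟩) _
      rw [hind]
      apply (hasDerivAt_A σm σp t).congr_of_eventuallyEq
      filter_upwards [Ioo_mem_nhds h h'] with y hy
      exact psi_eq_mid σm σp hy.1 hy.2.le
    · exact absurd h' h2
    · have hind : psid σm σp t = 0 :=
        Set.indicator_of_notMem (fun hc => absurd hc.2 (not_lt.2 h'.le)) _
      rw [hind]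
      apply (hasDerivAt_const t σp).congr_of_eventuallyEq
      filter_upwards [Ioi_mem_nhds h'] with y hy
      exact psi_eq_right σm σp (le_of_lt hy)

lemma hasDerivWithinAt_psi (t : ℝ) :
    HasDerivWithinAt (psi σm σp) (psid σm σp t) (Set.Ioi t) t := by
  rcases eq_or_ne t (-1) with rfl | h1
  · have hind : psid σm σp (-1) = c σm σp :=
      Set.indicator_of_mem (Set.mem_Ico.mpr ⟨le_rfl, by norm_num⟩) _
    rw [hind]
    apply ((hasDerivAt_A σm σp (-1)).hasDerivWithinAt).congr_of_eventuallyEq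
    · have hev : ∀ᶠ y in 𝓝 (-1:ℝ), y < 1 := eventually_lt_nhds (by norm_num)
      filter_upwards [self_mem_nhdsWithin, eventually_nhdsWithin_of_eventually_nhds hev]
        with y hy hy2
      exact psi_eq_mid σm σp hy hy2.le
    · rw [psi_eq_left σm σp le_rfl, A_neg_one]
  · rcases eq_or_ne t 1 with rfl | h2
    · have hind : psid σm σp 1 = 0 :=
        Set.indicator_of_notMem (fun hc => absurd hc.2 (lt_irrefl 1)) _
      rw [hind]
      apply ((hasDerivAt_const (1:ℝ) σp).hasDerivWithinAt).congr_of_eventuallyEq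
      · filter_upwards [self_mem_nhdsWithin] with y hy
        exact psi_eq_right σm σp (le_of_lt hy)
      · exact psi_eq_right σm σp le_rfl
    · exact (hasDerivAt_psi σm σp h1 h2).hasDerivWithinAt

lemma psi_ftc (a b : ℝ) : psi σm σp b - psi σm σp a = ∫ t in a..b, psid σm σp t := by
  rw [intervalIntegral.integral_eq_sub_of_hasDeriv_right
    ((continuous_psi σm σp).continuousOn)
    (fun x _ => hasDerivWithinAt_psi σm σp x)
    ((psid_integrable σm σp).intervalIntegrable)]

end PsiAux

end AuxLemmas

theorem stmt_5 (V : EuclideanSpace ℝ (Fin k) → ℝ)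
    (hV : ContDiff ℝ 2 V) (hVnn : ∀ u, 0 ≤ V u)
    (S : Set (EuclideanSpace ℝ (Fin k))) (hSfin : S.Finite)
    (hSzero : ∀ u, V u = 0 ↔ u ∈ S)
    (hhess : ∀ σ ∈ S, ∀ u : EuclideanSpace ℝ (Fin k), u ≠ 0 →
      0 < iteratedFDeriv ℝ 2 V σ ![u, u])
    (σm σp : EuclideanSpace ℝ (Fin k)) (hσm : σm ∈ S) (hσp : σp ∈ S) (hne : σm ≠ σp)
    (v : ℝ → EuclideanSpace ℝ (Fin k)) (hv : MemH1 v) :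
    InX V σm σp (fun t => psi σm σp t + v t) :=  by
  classical
  obtain ⟨⟨hgloc, hgftc⟩, hvL2, hgL2⟩ := hv
  set g := deriv v with hgdef
  -- continuity of v
  have hvc : Continuous v := by
    have hrep : v = fun x => v 0 + ∫ t in (0:ℝ)..x, g t := by
      funext x
      have h := hgftc 0 x
      rw [← h]
      abel
    rw [hrep]
    exact continuous_const.add
      (intervalIntegral.continuous_primitive (fun a b => hgloc.intervalIntegrable' a b) 0)
  set q : ℝ → EuclideanSpace ℝ (Fin k) := fun t => psi σm σp t + v t with hqdef
  have hqc : Continuous q := (PsiAux.continuous_psi σm σp).add hvc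
  set D : ℝ → EuclideanSpace ℝ (Fin k) := fun t => PsiAux.psid σm σp t + g t with hDdef
  have hvae : ∀ᵐ t, HasDerivAt v (g t) t := ae_hasDerivAt_of_integral hgloc hgftc
  have hne2 : ∀ᵐ t : ℝ, t ≠ -1 ∧ t ≠ 1 := by
    have h1 : volume ({-1, 1} : Set ℝ) = 0 := (Set.to_countable _).measure_zero volume
    have h2 : ∀ᵐ t : ℝ, t ∉ ({-1, 1} : Set ℝ) :=
      (MeasureTheory.measure_eq_zero_iff_ae_notMem).mp h1
    filter_upwards [h2] with t ht
    simp only [Set.mem_insert_iff, Set.mem_singleton_iff, not_or] at ht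
    exact ht
  have hqae : ∀ᵐ t, HasDerivAt q (D t) t := by
    filter_upwards [hvae, hne2] with t htv htne
    exact (PsiAux.hasDerivAt_psi σm σp htne.1 htne.2).add htv
  have hderiv_eq : deriv q =ᵐ[volume] D := by
    filter_upwards [hqae] with t ht using ht.deriv
  have hDloc : MeasureTheory.LocallyIntegrable D volume :=
    ((PsiAux.psid_integrable σm σp).locallyIntegrable).add hgloc
  have hqloc : MeasureTheory.LocallyIntegrable (deriv q) volume :=
    locallyIntegrable_congr' hDloc hderiv_eq.symm
  -- FTC for q
  have hftc : ∀ a b : ℝ, q b - q a = ∫ t in a..b, deriv q t := by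
    intro a b
    have h1 : q b - q a = (psi σm σp b - psi σm σp a) + (v b - v a) := by
      simp only [hqdef]; abel
    have h2 : (∫ t in a..b, D t)
        = (∫ t in a..b, PsiAux.psid σm σp t) + ∫ t in a..b, g t := by
      rw [← intervalIntegral.integral_add
        ((PsiAux.psid_integrable σm σp).intervalIntegrable)
        (hgloc.intervalIntegrable' a b)]
    have h3 : (∫ t in a..b, deriv q t) = ∫ t in a..b, D t := by
      apply intervalIntegral.integral_congr_ae
      filter_upwards [hderiv_eq] with t ht
      exact fun _ => ht
    rw [h1, PsiAux.psi_ftc σm σp a b, hgftc a b, h3, h2]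
  -- limits
  have hv2i : Integrable (fun t => ‖v t‖ ^ 2) volume := sq_int hvL2
  have hg2i : Integrable (fun t => ‖g t‖ ^ 2) volume := sq_int hgL2
  obtain ⟨htop, hbot⟩ := tendsto_zero_of_H1 hvc hgloc hgftc hv2i hg2i
  have hqtop : Tendsto q atTop (𝓝 σp) := by
    have h1 : Tendsto (fun t => σp + v t) atTop (𝓝 (σp + 0)) := tendsto_const_nhds.add htop
    rw [add_zero] at h1
    apply h1.congr'
    filter_upwards [eventually_ge_atTop (1:ℝ)] with t ht
    rw [hqdef]
    simp only
    rw [PsiAux.psi_eq_right σm σp ht]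
  have hqbot : Tendsto q atBot (𝓝 σm) := by
    have h1 : Tendsto (fun t => σm + v t) atBot (𝓝 (σm + 0)) := tendsto_const_nhds.add hbot
    rw [add_zero] at h1
    apply h1.congr'
    filter_upwards [eventually_le_atBot (-1:ℝ)] with t ht
    rw [hqdef]
    simp only
    rw [PsiAux.psi_eq_left σm σp ht]
  -- finite energy
  have hVσm : V σm = 0 := (hSzero σm).2 hσm
  have hVσp : V σp = 0 := (hSzero σp).2 hσp
  obtain ⟨M₁, hM₁nn, hM₁⟩ := quad_bound hV hVnn σm hVσm
  obtain ⟨M₂, hM₂nn, hM₂⟩ := quad_bound hV hVnn σp hVσp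
  have hVqc : Continuous (fun t => V (q t)) := hV.continuous.comp hqc
  -- choose thresholds
  obtain ⟨Tp₀, hTp₀⟩ := (Filter.eventually_atTop).1
    (htop.eventually (Metric.closedBall_mem_nhds (0 : EuclideanSpace ℝ (Fin k)) one_pos))
  obtain ⟨Tm₀, hTm₀⟩ := (Filter.eventually_atBot).1
    (hbot.eventually (Metric.closedBall_mem_nhds (0 : EuclideanSpace ℝ (Fin k)) one_pos))
  set Tp : ℝ := max Tp₀ 1 with hTpdef
  set Tm : ℝ := min Tm₀ (-1) with hTmdef
  have hvTp : ∀ t ≥ Tp, ‖v t‖ ≤ 1 := by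
    intro t ht
    have := hTp₀ t (le_trans (le_max_left _ _) ht)
    simpa [Metric.mem_closedBall, dist_eq_norm] using this
  have hvTm : ∀ t ≤ Tm, ‖v t‖ ≤ 1 := by
    intro t ht
    have := hTm₀ t (le_trans ht (min_le_left _ _))
    simpa [Metric.mem_closedBall, dist_eq_norm] using this
  have hVq_int : Integrable (fun t => V (q t)) volume := by
    rw [← MeasureTheory.integrableOn_univ]
    have hcover : (Set.univ : Set ℝ) ⊆ Set.Iic Tm ∪ (Set.Icc Tm Tp ∪ Set.Ioi Tp) := by
      intro t _
      rcases le_total t Tm with h | h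
      · exact Or.inl h
      · rcases le_total t Tp with h2 | h2
        · exact Or.inr (Or.inl ⟨h, h2⟩)
        · rcases eq_or_lt_of_le h2 with h3 | h3
          · exact Or.inr (Or.inl ⟨h, h3.symm.le⟩)
          · exact Or.inr (Or.inr h3)
    apply MeasureTheory.IntegrableOn.mono_set _ hcover
    apply MeasureTheory.IntegrableOn.union
    · -- Iic Tm
      apply MeasureTheory.Integrable.mono
        ((hv2i.const_mul M₁).integrableOn (s := Set.Iic Tm))
        hVqc.aestronglyMeasurable.restrict
      rw [MeasureTheory.ae_restrict_iff' measurableSet_Iic]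
      filter_upwards with t ht
      have hq_eq : q t = σm + v t := by
        rw [hqdef]; simp only
        rw [PsiAux.psi_eq_left σm σp (le_trans ht (min_le_right _ _))]
      have hb := hM₁ (v t) (hvTm t ht)
      rw [← hq_eq] at hb
      rw [Real.norm_eq_abs, Real.norm_eq_abs, abs_of_nonneg (hVnn _)]
      exact hb.trans (le_abs_self _)
    apply MeasureTheory.IntegrableOn.union
    · -- Icc Tm Tp
      exact hVqc.integrableOn_Icc
    · -- Ioi Tp
      apply MeasureTheory.Integrable.mono
        ((hv2i.const_mul M₂).integrableOn (s := Set.Ioi Tp))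
        hVqc.aestronglyMeasurable.restrict
      rw [MeasureTheory.ae_restrict_iff' measurableSet_Ioi]
      filter_upwards with t ht
      have hq_eq : q t = σp + v t := by
        rw [hqdef]; simp only
        rw [PsiAux.psi_eq_right σm σp (le_trans (le_max_right _ _) ht.le)]
      have hb := hM₂ (v t) (hvTp t ht.le)
      rw [← hq_eq] at hb
      rw [Real.norm_eq_abs, Real.norm_eq_abs, abs_of_nonneg (hVnn _)]
      exact hb.trans (le_abs_self _)
  have hDL2 : MemLp D 2 volume := (PsiAux.psid_memℒp σm σp).add hgL2
  have hD2i : Integrable (fun t => ‖D t‖ ^ 2) volume := sq_int hDL2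
  have hFE : FiniteEnergy V q := by
    have hint : Integrable (fun t => (1/2 : ℝ) * ‖D t‖ ^ 2 + V (q t)) volume :=
      (hD2i.const_mul (1/2)).add hVq_int
    apply hint.congr
    filter_upwards [hderiv_eq] with t ht
    unfold Ed
    rw [ht]
  exact ⟨⟨hqloc, hftc⟩, hFE, hqbot, hqtop⟩
end
end

section
/- There exists η_min > 0, depending only on V, such that any solution q : ℝ → ℝ^k of q'' = ∇V(q) connecting two wells (i.e. q ∈ X(σᵢ, σⱼ) for some zeros σᵢ, σⱼ of V) satisfies either E(q) ≥ η_min or q is constant. -/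
open MeasureTheory Filter intervalIntegral
open scoped RealInnerProductSpace Topology

noncomputable section

variable {k : ℕ}

local notation "E" => EuclideanSpace ℝ (Fin k)

set_option maxHeartbeats 1000000 in
lemma grad_inner (V : E → ℝ) (x v : E) : ⟪gradient V x, v⟫ = fderiv ℝ V x v := by
  rw [gradient]; exact InnerProductSpace.toDual_symm_apply

set_option maxHeartbeats 1000000 in
lemma freq_small {f : ℝ → ℝ} (hf : Integrable f volume)
    {ε : ℝ} (hε : 0 < ε) (c : ℝ) :
    (∃ t, c < t ∧ f t < ε) ∧ (∃ t, t < c ∧ f t < ε) := by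
  constructor
  · by_contra h
    push_neg at h
    have hconst : IntegrableOn (fun _ : ℝ => ε) (Set.Ioi c) volume := by
      refine Integrable.mono' (hf.integrableOn) aestronglyMeasurable_const ?_
      refine (ae_restrict_iff' measurableSet_Ioi).mpr (ae_of_all _ fun t ht => ?_)
      rw [Real.norm_eq_abs, abs_of_pos hε]
      exact h t ht
    rcases integrable_const_iff.mp hconst with h0 | hfin
    · exact absurd h0 (ne_of_gt hε)
    · rw [isFiniteMeasure_restrict, Real.volume_Ioi] at hfin
      exact absurd hfin (by simp)
  · by_contra h
    push_neg at h
    have hconst : IntegrableOn (fun _ : ℝ => ε) (Set.Iio c) volume := by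
      refine Integrable.mono' (hf.integrableOn) aestronglyMeasurable_const ?_
      refine (ae_restrict_iff' measurableSet_Iio).mpr (ae_of_all _ fun t ht => ?_)
      rw [Real.norm_eq_abs, abs_of_pos hε]
      exact h t ht
    rcases integrable_const_iff.mp hconst with h0 | hfin
    · exact absurd h0 (ne_of_gt hε)
    · rw [isFiniteMeasure_restrict, Real.volume_Iio] at hfin
      exact absurd hfin (by simp)

set_option maxHeartbeats 1000000 in
lemma posdef_nbhd {V : E → ℝ} (hV : ContDiff ℝ 2 V) (σ : E)
    (hmin : ∀ u, V σ ≤ V u)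
    (hh : ∀ u : E, u ≠ 0 → 0 < iteratedFDeriv ℝ 2 V σ ![u, u]) :
    ∃ r > 0, ∀ u : E, dist u σ ≤ r → 0 ≤ ⟪gradient V u, u - σ⟫ := by
  by_cases hNT : Nontrivial E
  case neg =>
    have hsub : Subsingleton E := not_nontrivial_iff_subsingleton.mp hNT
    exact ⟨1, one_pos, fun u _ => by
      have : u - σ = 0 := Subsingleton.elim _ _
      rw [this, inner_zero_right]⟩
  -- second derivative
  have hF1 : ContDiff ℝ 1 (fderiv ℝ V) := hV.fderiv_right (m := 1) (by norm_num)
  set B : E → E →L[ℝ] E →L[ℝ] ℝ := fderiv ℝ (fderiv ℝ V) with hBdef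
  have hBc : Continuous B := (hF1.fderiv_right (m := 0) (by norm_num)).continuous
  have hBapp : ∀ x (u : E), iteratedFDeriv ℝ 2 V x ![u, u] = B x u u := by
    intro x u
    rw [iteratedFDeriv_two_apply]
    simp [hBdef]
  -- uniform positivity of the Hessian quadratic form near σ via the tube lemma
  set W : E × E → ℝ := fun p => B p.1 p.2 p.2 with hWdef
  have hWc : Continuous W := by
    exact ((hBc.comp continuous_fst).clm_apply continuous_snd).clm_apply continuous_snd
  have hU : IsOpen {p : E × E | 0 < W p} := isOpen_lt continuous_const hWc
  have hsub : ({σ} ×ˢ Metric.sphere (0:E) 1 : Set (E × E)) ⊆ {p : E × E | 0 < W p} := by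
    rintro ⟨x, w⟩ ⟨hx, hw⟩
    simp only [Set.mem_singleton_iff] at hx
    subst hx
    have hw1 : ‖w‖ = 1 := mem_sphere_zero_iff_norm.mp hw
    have hwne : w ≠ 0 := by simp [← norm_ne_zero_iff, hw1]
    have := hh w hwne
    rw [hBapp] at this
    exact this
  obtain ⟨U1, U2, hU1o, _, hσU1, hsphU2, hUsub⟩ :=
    generalized_tube_lemma isCompact_singleton (isCompact_sphere (0:E) 1) hU hsub
  obtain ⟨d, hd, hball⟩ := Metric.mem_nhds_iff.mp (hU1o.mem_nhds (hσU1 rfl))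
  have hBpos0 : ∀ x : E, dist x σ ≤ d / 2 → ∀ v : E, 0 ≤ B x v v := by
    intro x hx v
    rcases eq_or_ne v 0 with rfl | hv
    · simp
    · have hvn : (0:ℝ) < ‖v‖ := norm_pos_iff.mpr hv
      set w : E := ‖v‖⁻¹ • v with hwdef
      have hws : w ∈ Metric.sphere (0 : E) 1 := by
        simp [hwdef, norm_smul, abs_of_pos (inv_pos.mpr hvn), inv_mul_cancel₀ (ne_of_gt hvn)]
      have hxU : x ∈ U1 := hball (by rw [Metric.mem_ball]; linarith)
      have hWpos : 0 < W (x, w) := hUsub ⟨hxU, hsphU2 hws⟩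
      have h2 : B x w w = ‖v‖⁻¹ * (‖v‖⁻¹ * (B x v v)) := by
        simp [hwdef, _root_.map_smul, ContinuousLinearMap.smul_apply, smul_eq_mul]
      have hWw : W (x, w) = B x w w := rfl
      rw [hWw, h2] at hWpos
      have hinv : 0 < ‖v‖⁻¹ := inv_pos.mpr hvn
      nlinarith [hinv, mul_pos hinv hinv]
  refine ⟨d / 2, by positivity, fun u hu => ?_⟩
  set v : E := u - σ with hvdef
  -- line segment function
  have hvr : ‖v‖ ≤ d / 2 := by rwa [hvdef, ← dist_eq_norm]
  set g : ℝ → ℝ := fun s => fderiv ℝ V (σ + s • v) v with hgdef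
  have hg : ∀ s : ℝ, HasDerivAt g (B (σ + s • v) v v) s := by
    intro s
    have hφ : HasDerivAt (fun s : ℝ => σ + s • v) v s := by
      simpa using ((hasDerivAt_id s).smul_const v).const_add σ
    have hFd : HasFDerivAt (fderiv ℝ V) (B (σ + s • v)) (σ + s • v) :=
      (hF1.differentiable (by norm_num) (σ + s • v)).hasFDerivAt
    have hc : HasDerivAt (fun s : ℝ => fderiv ℝ V (σ + s • v)) (B (σ + s • v) v) s :=
      hFd.comp_hasDerivAt s hφ
    have := hc.clm_apply (hasDerivAt_const s v)
    simpa using this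
  have hmono : MonotoneOn g (Set.Icc (0:ℝ) 1) := by
    refine monotoneOn_of_deriv_nonneg (convex_Icc 0 1)
      (fun s _ => (hg s).differentiableAt.continuousAt.continuousWithinAt)
      (fun s _ => (hg s).differentiableAt.differentiableWithinAt) ?_
    intro s hs
    rw [interior_Icc] at hs
    rw [(hg s).deriv]
    refine hBpos0 _ ?_ v
    have : dist (σ + s • v) σ = ‖s • v‖ := by
      rw [dist_eq_norm]; congr 1; abel
    rw [this, norm_smul, Real.norm_eq_abs, abs_of_pos hs.1]
    calc s * ‖v‖ ≤ 1 * ‖v‖ := mul_le_mul_of_nonneg_right hs.2.le (norm_nonneg _)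
      _ ≤ d / 2 := by rwa [one_mul]
  have hg0 : g 0 = 0 := by
    have hloc : IsLocalMin V σ := Filter.Eventually.of_forall hmin
    have : fderiv ℝ V σ = 0 := hloc.fderiv_eq_zero
    simp [hgdef, this]
  have hg01 : g 0 ≤ g 1 := hmono ⟨le_rfl, zero_le_one⟩ ⟨zero_le_one, le_rfl⟩ zero_le_one
  have hg1 : g 1 = ⟪gradient V u, u - σ⟫ := by
    rw [grad_inner]
    simp [hgdef, hvdef]
  rw [← hg1]
  rw [hg0] at hg01
  exact hg01

set_option maxHeartbeats 1000000 in
lemma trapped_const {V : E → ℝ} {q : ℝ → E} (hq : ContDiff ℝ 2 q)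
    (hode : ∀ t, deriv (deriv q) t = gradient V (q t))
    (hint : Integrable (fun t => ‖deriv q t‖ ^ 2) volume)
    (σ : E) (r : ℝ) (hrpos : 0 ≤ r)
    (hr : ∀ u : E, dist u σ ≤ r → 0 ≤ ⟪gradient V u, u - σ⟫)
    (htrap : ∀ t, dist (q t) σ ≤ r) :
    ∀ s t : ℝ, q s = q t := by
  have h2 : (2 : WithTop ℕ∞) = 1 + 1 := by norm_num
  rw [h2, contDiff_succ_iff_deriv] at hq
  have hq1 : Differentiable ℝ q := hq.1
  have hq2 : Differentiable ℝ (deriv q) := hq.2.2.differentiable (by norm_num)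
  set f : ℝ → ℝ := fun t => ⟪q t - σ, deriv q t⟫ with hfdef
  have hf' : ∀ t : ℝ, HasDerivAt f
      (‖deriv q t‖ ^ 2 + ⟪q t - σ, gradient V (q t)⟫) t := by
    intro t
    have h1 : HasDerivAt (fun s => q s - σ) (deriv q t) t :=
      (hq1 t).hasDerivAt.sub_const σ
    have hg : HasDerivAt (deriv q) (gradient V (q t)) t := by
      have := (hq2 t).hasDerivAt
      rwa [hode t] at this
    have := h1.inner ℝ hg
    simp only [real_inner_self_eq_norm_sq] at this
    simpa [add_comm] using this
  have hderiv_nonneg : ∀ t, 0 ≤ ‖deriv q t‖ ^ 2 + ⟪q t - σ, gradient V (q t)⟫ := by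
    intro t
    have h0 : 0 ≤ ⟪gradient V (q t), q t - σ⟫ := hr (q t) (htrap t)
    rw [real_inner_comm] at h0
    positivity
  have hmono : Monotone f :=
    monotone_of_deriv_nonneg (fun t => (hf' t).differentiableAt)
      (fun t => by rw [(hf' t).deriv]; exact hderiv_nonneg t)
  -- |f| ≤ (r+1) * ‖deriv q‖
  have hCS : ∀ t, |f t| ≤ (r + 1) * ‖deriv q t‖ := by
    intro t
    calc |f t| ≤ ‖q t - σ‖ * ‖deriv q t‖ := abs_real_inner_le_norm _ _
      _ ≤ (r + 1) * ‖deriv q t‖ := by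
          apply mul_le_mul_of_nonneg_right _ (norm_nonneg _)
          have := htrap t
          rw [dist_eq_norm] at this
          linarith
  have hf0 : ∀ t, f t = 0 := by
    have key : ∀ t (ε : ℝ), 0 < ε → f t ≤ (r + 1) * ε ∧ -((r + 1) * ε) ≤ f t := by
      intro t ε hε
      obtain ⟨⟨t1, ht1, hs1⟩, ⟨t2, ht2, hs2⟩⟩ :=
        freq_small hint (show (0:ℝ) < ε ^ 2 by positivity) t
      have hn1 : ‖deriv q t1‖ < ε := by
        have := hs1
        exact lt_of_pow_lt_pow_left₀ 2 hε.le this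
      have hn2 : ‖deriv q t2‖ < ε := by
        exact lt_of_pow_lt_pow_left₀ 2 hε.le hs2
      constructor
      · calc f t ≤ f t1 := hmono ht1.le
          _ ≤ |f t1| := le_abs_self _
          _ ≤ (r + 1) * ‖deriv q t1‖ := hCS t1
          _ ≤ (r + 1) * ε := by
              apply mul_le_mul_of_nonneg_left hn1.le; linarith
      · calc -((r + 1) * ε) ≤ -((r + 1) * ‖deriv q t2‖) := by
              apply neg_le_neg; apply mul_le_mul_of_nonneg_left hn2.le; linarith
          _ ≤ -|f t2| := neg_le_neg (hCS t2)
          _ ≤ f t2 := neg_abs_le _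
          _ ≤ f t := hmono ht2.le
    intro t
    have hub : f t ≤ 0 := by
      by_contra h
      push_neg at h
      have hrr : 0 < r + 1 := by linarith
      have := (key t (f t / (2 * (r + 1))) (by positivity)).1
      have heq : (r + 1) * (f t / (2 * (r + 1))) = f t / 2 := by
        field_simp
      rw [heq] at this
      linarith
    have hlb : 0 ≤ f t := by
      by_contra h
      push_neg at h
      have hrr : 0 < r + 1 := by linarith
      have := (key t (-f t / (2 * (r + 1))) (div_pos (by linarith) (by linarith))).2
      have heq : (r + 1) * (-f t / (2 * (r + 1))) = -f t / 2 := by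
        field_simp
      rw [heq] at this
      linarith
    linarith
  have hq'0 : ∀ t, deriv q t = 0 := by
    intro t
    have hfz : f = fun _ => (0 : ℝ) := funext hf0
    have hd0 : deriv f t = 0 := by rw [hfz]; exact deriv_const t 0
    rw [(hf' t).deriv] at hd0
    have h0 : 0 ≤ ⟪q t - σ, gradient V (q t)⟫ := by
      have := hr (q t) (htrap t); rwa [real_inner_comm] at this
    have : ‖deriv q t‖ ^ 2 = 0 := by nlinarith [sq_nonneg ‖deriv q t‖]
    have : ‖deriv q t‖ = 0 := by
      have := sq_eq_zero_iff.mp this; exact this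
    exact norm_eq_zero.mp this
  intro s t
  exact is_const_of_deriv_eq_zero hq1 hq'0 s t

set_option maxHeartbeats 1000000 in
lemma well_energy {V : E → ℝ} (hV : ContDiff ℝ 2 V) (hVnn : ∀ u, 0 ≤ V u)
    {S : Set E} (hSfin : S.Finite) (hSzero : ∀ u, V u = 0 ↔ u ∈ S)
    {σ : E} (hσ : σ ∈ S)
    (hh : ∀ u : E, u ≠ 0 → 0 < iteratedFDeriv ℝ 2 V σ ![u, u]) :
    ∃ e > 0, ∀ q : ℝ → E,
      (∀ a b : ℝ, q b - q a = ∫ t in a..b, deriv q t) →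
      Integrable (Ed V q) volume →
      Tendsto q atBot (𝓝 σ) → ContDiff ℝ 2 q →
      (∀ t : ℝ, deriv (deriv q) t = gradient V (q t)) →
      (¬ ∀ s t : ℝ, q s = q t) →
      e ≤ Energy V q := by
  by_cases hNT : Nontrivial E
  case neg =>
    have hsub : Subsingleton E := not_nontrivial_iff_subsingleton.mp hNT
    exact ⟨1, one_pos, fun q _ _ _ _ _ hnc =>
      absurd (fun s t => Subsingleton.elim _ _) hnc⟩
  -- radius where the Hessian forces monotonicity
  obtain ⟨r₁, hr₁pos, hr₁⟩ := posdef_nbhd hV σ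
    (fun u => by rw [(hSzero σ).mpr hσ]; exact hVnn u) hh
  -- separation radius from the other wells
  obtain ⟨r₂, hr₂pos, hr₂⟩ : ∃ r₂ > 0, ∀ σ' ∈ S, σ' ≠ σ → r₂ ≤ dist σ' σ := by
    by_cases hS' : (S \ {σ}).Nonempty
    · have hfin : (S \ {σ}).Finite := hSfin.subset Set.diff_subset
      have hFne : hfin.toFinset.Nonempty := by
        rwa [Set.Finite.toFinset_nonempty]
      refine ⟨hfin.toFinset.inf' hFne (fun σ' => dist σ' σ), ?_, ?_⟩
      · rw [gt_iff_lt, Finset.lt_inf'_iff]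
        intro σ' hσ'
        rw [Set.Finite.mem_toFinset] at hσ'
        exact dist_pos.mpr hσ'.2
      · intro σ' hσ'S hne
        exact Finset.inf'_le _ (by rw [Set.Finite.mem_toFinset]; exact ⟨hσ'S, hne⟩)
    · exact ⟨1, one_pos, fun σ' hσ'S hne => absurd ⟨hσ'S, hne⟩ (fun h => hS' ⟨σ', h⟩)⟩
  set r : ℝ := min r₁ (r₂ / 2) with hrdef
  have hrpos : 0 < r := lt_min hr₁pos (by positivity)
  have hrr₁ : r ≤ r₁ := min_le_left _ _
  have hrr₂ : r ≤ r₂ / 2 := min_le_right _ _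
  -- the annulus and its minimum of V
  set A : Set E := Metric.closedBall σ r \ Metric.ball σ (r / 2) with hAdef
  have hAcomp : IsCompact A := (isCompact_closedBall σ r).diff Metric.isOpen_ball
  have hAne : A.Nonempty := by
    obtain ⟨v, hv⟩ := exists_norm_eq E hrpos.le
    refine ⟨σ + v, ?_, ?_⟩
    · rw [Metric.mem_closedBall, dist_eq_norm, add_sub_cancel_left, hv]
    · rw [Metric.mem_ball, dist_eq_norm, add_sub_cancel_left, hv]
      linarith
  obtain ⟨x₀, hx₀A, hx₀min⟩ := hAcomp.exists_isMinOn hAne hV.continuous.continuousOn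
  have hx₀ball : dist x₀ σ ≤ r := Metric.mem_closedBall.mp hx₀A.1
  have hx₀far : r / 2 ≤ dist x₀ σ := not_lt.mp (fun h => hx₀A.2 (Metric.mem_ball.mpr h))
  set δ : ℝ := V x₀ with hδdef
  have hδpos : 0 < δ := by
    rcases lt_or_eq_of_le (hVnn x₀) with h | h
    · exact h
    · exfalso
      have hx₀S : x₀ ∈ S := (hSzero x₀).mp h.symm
      rcases eq_or_ne x₀ σ with rfl | hne
      · rw [dist_self] at hx₀far; linarith
      · have := hr₂ x₀ hx₀S hne
        linarith
  refine ⟨Real.sqrt (2 * δ) * (r / 2), by positivity, ?_⟩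
  intro q hAC hFE hbot hq hode hnc
  -- integrability of the speed squared
  have hqd : Differentiable ℝ q := hq.differentiable (by norm_num)
  have hq'c : Continuous (deriv q) := by
    have h2 : (2 : WithTop ℕ∞) = 1 + 1 := by norm_num
    rw [h2, contDiff_succ_iff_deriv] at hq
    exact hq.2.2.continuous
  have hEdnn : ∀ t, 0 ≤ Ed V q t := fun t => by
    have := hVnn (q t); rw [Ed]; positivity
  have hint : Integrable (fun t => ‖deriv q t‖ ^ 2) volume := by
    refine (hFE.const_mul 2).mono' ?_ (ae_of_all _ fun t => ?_)
    · exact ((hq'c.norm.pow 2)).aestronglyMeasurable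
    · rw [Real.norm_eq_abs, abs_of_nonneg (by positivity)]
      rw [Ed]
      have := hVnn (q t)
      nlinarith [sq_nonneg ‖deriv q t‖]
  -- exit time
  obtain ⟨t₁, ht₁⟩ : ∃ t₁, r < dist (q t₁) σ := by
    by_contra h
    push_neg at h
    exact hnc (trapped_const (by
      have h2 : (2 : WithTop ℕ∞) = 1 + 1 := by norm_num
      exact hq) hode hint σ r hrpos.le
      (fun u hu => hr₁ u (le_trans hu hrr₁)) h)
  -- a time far in the past where q is near σ
  obtain ⟨t₀, ht₀near, ht₀lt⟩ : ∃ t₀, dist (q t₀) σ < r / 2 ∧ t₀ < t₁ := by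
    have h1 : ∀ᶠ t in atBot, dist (q t) σ < r / 2 := by
      have := hbot.eventually (Metric.ball_mem_nhds σ (show (0:ℝ) < r / 2 by positivity))
      simpa [Metric.mem_ball] using this
    exact (h1.and (eventually_lt_atBot t₁)).exists
  set g : ℝ → ℝ := fun t => dist (q t) σ with hgdef
  have hgc : Continuous g := (hqd.continuous.dist continuous_const)
  -- first crossing time b
  set Sb : Set ℝ := {t ∈ Set.Icc t₀ t₁ | r ≤ g t} with hSbdef
  have hSbcl : IsClosed Sb := isClosed_Icc.inter (isClosed_le continuous_const hgc)
  have hSbne : Sb.Nonempty := ⟨t₁, ⟨ht₀lt.le, le_rfl⟩, ht₁.le⟩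
  have hSbbdd : BddBelow Sb := ⟨t₀, fun x hx => hx.1.1⟩
  set b : ℝ := sInf Sb with hbdef
  have hbmem : b ∈ Sb := hSbcl.csInf_mem hSbne hSbbdd
  have hbIcc : b ∈ Set.Icc t₀ t₁ := hbmem.1
  have hgb : r ≤ g b := hbmem.2
  have hblow : ∀ t, t₀ ≤ t → t < b → g t < r := by
    intro t h1 h2
    by_contra h
    push_neg at h
    exact absurd (csInf_le hSbbdd ⟨⟨h1, h2.le.trans hbIcc.2⟩, h⟩) (not_le.mpr h2)
  have ht₀b : t₀ < b := by
    rcases lt_or_eq_of_le hbIcc.1 with h | h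
    · exact h
    · exfalso; rw [← h] at hgb; rw [hgdef] at hgb; simp at hgb; linarith
  have hgble : g b ≤ r := by
    by_contra h
    push_neg at h
    have hU : {x : ℝ | r < g x} ∈ 𝓝 b :=
      (isOpen_lt continuous_const hgc).mem_nhds h
    obtain ⟨ε, hε, hball⟩ := Metric.mem_nhds_iff.mp hU
    rcases le_or_gt (b - ε / 2) t₀ with hc | hc
    · have ht₀mem : t₀ ∈ Metric.ball b ε := by
        rw [Metric.mem_ball, Real.dist_eq, abs_of_nonpos (by linarith)]
        linarith
      have := hball ht₀mem
      have h2 : g t₀ < r := by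
        have : g t₀ < r / 2 := ht₀near
        linarith
      exact absurd (hball ht₀mem) (not_lt.mpr h2.le)
    · have htmem : b - ε / 2 ∈ Metric.ball b ε := by
        rw [Metric.mem_ball, Real.dist_eq, abs_of_nonpos (by linarith)]
        linarith
      have h1 : r < g (b - ε / 2) := hball htmem
      have h2 : g (b - ε / 2) < r := hblow _ hc.le (by linarith)
      linarith
  -- last entry time a
  set Sa : Set ℝ := {t ∈ Set.Icc t₀ b | g t ≤ r / 2} with hSadef
  have hSacl : IsClosed Sa := isClosed_Icc.inter (isClosed_le hgc continuous_const)
  have hSane : Sa.Nonempty := ⟨t₀, ⟨le_rfl, ht₀b.le⟩, ht₀near.le⟩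
  have hSabdd : BddAbove Sa := ⟨b, fun x hx => hx.1.2⟩
  set a : ℝ := sSup Sa with hadef
  have hamem : a ∈ Sa := hSacl.csSup_mem hSane hSabdd
  have haIcc : a ∈ Set.Icc t₀ b := hamem.1
  have hga : g a ≤ r / 2 := hamem.2
  have hahigh : ∀ t, a < t → t ≤ b → r / 2 < g t := by
    intro t h1 h2
    by_contra h
    push_neg at h
    exact absurd (le_csSup hSabdd ⟨⟨haIcc.1.trans h1.le, h2⟩, h⟩) (not_le.mpr h1)
  have hab : a < b := by
    rcases lt_or_eq_of_le haIcc.2 with h | h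
    · exact h
    · exfalso; rw [h] at hga; linarith
  -- on (a, b] the curve is in the annulus
  have hannulus : ∀ t ∈ Set.Ioc a b, q t ∈ A := by
    rintro t ⟨h1, h2⟩
    constructor
    · rw [Metric.mem_closedBall]
      rcases lt_or_eq_of_le h2 with h | h
      · exact (hblow t (haIcc.1.trans h1.le) h).le
      · rw [h]; exact hgble
    · rw [Metric.mem_ball, not_lt]
      exact (hahigh t h1 h2).le
  -- pointwise lower bound
  have hpoint : ∀ t ∈ Set.Ioc a b, Real.sqrt (2 * δ) * ‖deriv q t‖ ≤ Ed V q t := by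
    intro t ht
    have hVge : δ ≤ V (q t) := hx₀min (hannulus t ht)
    rw [Ed]
    nlinarith [sq_nonneg (‖deriv q t‖ - Real.sqrt (2 * δ)),
      Real.sq_sqrt (by positivity : (0:ℝ) ≤ 2 * δ),
      Real.sqrt_nonneg (2 * δ), norm_nonneg (deriv q t)]
  -- integral estimates
  have hmeas : MeasurableSet (Set.Ioc a b) := measurableSet_Ioc
  have hnormint : IntegrableOn (fun t => ‖deriv q t‖) (Set.Ioc a b) volume :=
    (hq'c.norm).integrableOn_Ioc
  have hI2 : ∫ t in Set.Ioc a b, Real.sqrt (2 * δ) * ‖deriv q t‖ ≤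
      ∫ t in Set.Ioc a b, Ed V q t := by
    refine setIntegral_mono_on (hnormint.const_mul _) hFE.integrableOn hmeas hpoint
  have hI1 : ∫ t in Set.Ioc a b, Ed V q t ≤ Energy V q :=
    setIntegral_le_integral hFE (ae_of_all _ hEdnn)
  have hI3 : ∫ t in Set.Ioc a b, Real.sqrt (2 * δ) * ‖deriv q t‖ =
      Real.sqrt (2 * δ) * ∫ t in Set.Ioc a b, ‖deriv q t‖ :=
    MeasureTheory.integral_const_mul _ _
  have hdisp : r / 2 ≤ ∫ t in Set.Ioc a b, ‖deriv q t‖ := by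
    have hq' : q b - q a = ∫ t in a..b, deriv q t := hAC a b
    have h1 : ‖q b - q a‖ ≤ ∫ t in Set.Ioc a b, ‖deriv q t‖ := by
      rw [hq']
      have := intervalIntegral.norm_integral_le_integral_norm_uIoc
        (f := deriv q) (a := a) (b := b) (μ := volume)
      rwa [Set.uIoc_of_le hab.le] at this
    have h2 : g b - g a ≤ ‖q b - q a‖ := by
      rw [hgdef]
      have := abs_dist_sub_le (q b) (q a) σ
      rw [← dist_eq_norm]
      calc dist (q b) σ - dist (q a) σ ≤ |dist (q b) σ - dist (q a) σ| := le_abs_self _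
        _ ≤ dist (q b) (q a) := abs_dist_sub_le _ _ _
    have h3 : r / 2 ≤ g b - g a := by linarith
    linarith
  calc Real.sqrt (2 * δ) * (r / 2)
      ≤ Real.sqrt (2 * δ) * ∫ t in Set.Ioc a b, ‖deriv q t‖ :=
        mul_le_mul_of_nonneg_left hdisp (Real.sqrt_nonneg _)
    _ = ∫ t in Set.Ioc a b, Real.sqrt (2 * δ) * ‖deriv q t‖ := hI3.symm
    _ ≤ ∫ t in Set.Ioc a b, Ed V q t := hI2
    _ ≤ Energy V q := hI1

set_option maxHeartbeats 1000000 in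
theorem stmt_15 (V : EuclideanSpace ℝ (Fin k) → ℝ)
    (hV : ContDiff ℝ 2 V) (hVnn : ∀ u, 0 ≤ V u)
    (S : Set (EuclideanSpace ℝ (Fin k))) (hSfin : S.Finite)
    (hSzero : ∀ u, V u = 0 ↔ u ∈ S)
    (hhess : ∀ σ ∈ S, ∀ u : EuclideanSpace ℝ (Fin k), u ≠ 0 →
      0 < iteratedFDeriv ℝ 2 V σ ![u, u])
    (α₀ β₀ R₀ : ℝ) (hα₀ : 0 < α₀) (hβ₀ : 0 < β₀) (hR₀ : 0 < R₀)
    (hcoer : ∀ u : EuclideanSpace ℝ (Fin k), R₀ ≤ ‖u‖ →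
      α₀ * ‖u‖ ^ 2 ≤ ⟪gradient V u, u⟫ ∧ β₀ ≤ V u) :
    ∃ η > (0 : ℝ), ∀ σi ∈ S, ∀ σj ∈ S, ∀ q : ℝ → EuclideanSpace ℝ (Fin k),
      InX V σi σj q → ContDiff ℝ 2 q →
      (∀ t : ℝ, deriv (deriv q) t = gradient V (q t)) →
      η ≤ Energy V q ∨ ∀ s t : ℝ, q s = q t := by
  by_cases hS : S.Nonempty
  case neg =>
    refine ⟨1, one_pos, fun σi hσi => absurd ⟨σi, hσi⟩ hS⟩
  choose! e hepos heP using fun σ (hσ : σ ∈ S) =>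
    well_energy hV hVnn hSfin hSzero hσ (hhess σ hσ)
  have hne : hSfin.toFinset.Nonempty := by rwa [Set.Finite.toFinset_nonempty]
  refine ⟨hSfin.toFinset.inf' hne e, ?_, ?_⟩
  · rw [gt_iff_lt, Finset.lt_inf'_iff]
    intro σ' hσ'
    exact hepos σ' (hSfin.mem_toFinset.mp hσ')
  · intro σi hσi σj hσj q hInX hq hode
    by_cases hc : ∀ s t : ℝ, q s = q t
    · exact Or.inr hc
    · left
      calc hSfin.toFinset.inf' hne e ≤ e σi :=
            Finset.inf'_le e (hSfin.mem_toFinset.mpr hσi)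
        _ ≤ Energy V q :=
            heP σi hσi q hInX.1.2 hInX.2.1 hInX.2.2.1 hq hode hc
end
end
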